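/- arXiv:2501.18302 — 2 statements merged into one kernel-verified Lean document; each statement's English description precedes it below -/
import Mathlib

section
/- Assume (v, p, θ) is an axially symmetric smooth solution of the Navier–Stokes–heat system on Ω×(0,T) with the stated boundary and initial conditions, that 0 < θ_* ≤ θ ≤ θ* on Ω×(0,T), that |α(ϑ)| ≤ M_α for ϑ ∈ [θ_*,θ*], and that f₀ = r f_φ ∈ L₁(0,T;L_∞(Ω)) and u(0) = r v_φ(·,0) ∈ L_∞(Ω). Then the swirl u = r v_φ (which vanishes at r = 0 and on S₁, and has u_{,z} = 0 on S₂) satisfies for every t ∈ (0,T): |u(t)|_{∞,Ω} ≤ M_α |f₀|_{∞,1,Ω^t} + |u(0)|_{∞,Ω}. -/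
open MeasureTheory Real Set
open scoped ENNReal

noncomputable section

/-- The half-strip `(0,R) × (-a,a)` of `(r,z)` coordinates describing the cylinder
`Ω = {x ∈ ℝ³ : x₁² + x₂² < R², |x₃| < a}`. -/
def cylStrip (R a : ℝ) : Set (ℝ × ℝ) := Ioo 0 R ×ˢ Ioo (-a) a

/-- The measure on the `(r,z)` half-strip corresponding to Lebesgue measure on the
cylinder `Ω` for axially symmetric integrands: `dμ = 2π r dr dz`. -/
def cylMeas (R a : ℝ) : Measure (ℝ × ℝ) :=
  ((volume : Measure (ℝ × ℝ)).restrict (cylStrip R a)).withDensity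
    fun q => ENNReal.ofReal (2 * π * q.1)

/-- The space-time measure corresponding to `Ω^t = Ω × (0,t)`. -/
def cylMeasT (R a t : ℝ) : Measure ((ℝ × ℝ) × ℝ) :=
  (cylMeas R a).prod (volume.restrict (Ioo 0 t))

/-- `∂_r` of a function of `(r,z,t)`. -/
def pdr (w : ℝ → ℝ → ℝ → ℝ) : ℝ → ℝ → ℝ → ℝ := fun r z t => deriv (fun s => w s z t) r
/-- `∂_z` of a function of `(r,z,t)`. -/
def pdz (w : ℝ → ℝ → ℝ → ℝ) : ℝ → ℝ → ℝ → ℝ := fun r z t => deriv (fun s => w r s t) z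
/-- `∂_t` of a function of `(r,z,t)`. -/
def pdt (w : ℝ → ℝ → ℝ → ℝ) : ℝ → ℝ → ℝ → ℝ := fun r z t => deriv (fun s => w r z s) t

/-- The spatial slice at time `t`, as a function on the `(r,z)` strip. -/
def sp (w : ℝ → ℝ → ℝ → ℝ) (t : ℝ) : ℝ × ℝ → ℝ := fun q => w q.1 q.2 t
/-- The space-time uncurrying of `w`. -/
def st (w : ℝ → ℝ → ℝ → ℝ) : (ℝ × ℝ) × ℝ → ℝ := fun q => w q.1.1 q.1.2 q.2

/-- `|w(·,t)|_{p,Ω}`. -/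
def nLp (R a : ℝ) (p : ℝ≥0∞) (w : ℝ → ℝ → ℝ → ℝ) (t : ℝ) : ℝ≥0∞ :=
  eLpNorm (sp w t) p (cylMeas R a)

/-- The energy norm `‖w‖_{V(Ω^t)} = ess sup_{t' ∈ (0,t)} |w(t')|_{2,Ω} + |∇w|_{2,Ω^t}`,
where for an axially symmetric scalar `|∇w|² = w_{,r}² + w_{,z}²`. -/
def Vnorm (R a t : ℝ) (w : ℝ → ℝ → ℝ → ℝ) : ℝ≥0∞ :=
  essSup (fun t' => nLp R a 2 w t') (volume.restrict (Ioo 0 t))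
  + eLpNorm (fun q : (ℝ × ℝ) × ℝ =>
      Real.sqrt ((pdr w q.1.1 q.1.2 q.2) ^ 2 + (pdz w q.1.1 q.1.2 q.2) ^ 2)) 2 (cylMeasT R a t)
/-- Axially symmetric smooth solution of the Navier–Stokes–heat system on the cylinder
of radius `R`, height `2a`, on the time interval `(0,T)`, written in cylindrical
coordinates `(r,z,t)`; `vr vφ vz` are the cylindrical velocity components, `pp` the
pressure, `θ` the temperature, `(fr, fφ, fz)` the external force and `g` the heat source. -/
structure NSHeat (ν κ R a T : ℝ) (α : ℝ → ℝ)
    (vr vφ vz pp θ fr fφ fz g : ℝ → ℝ → ℝ → ℝ) : Prop where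
  smooth_vr : ∀ n : ℕ, ContDiff ℝ n (fun q : ℝ × ℝ × ℝ => vr q.1 q.2.1 q.2.2)
  smooth_vφ : ∀ n : ℕ, ContDiff ℝ n (fun q : ℝ × ℝ × ℝ => vφ q.1 q.2.1 q.2.2)
  smooth_vz : ∀ n : ℕ, ContDiff ℝ n (fun q : ℝ × ℝ × ℝ => vz q.1 q.2.1 q.2.2)
  smooth_pp : ∀ n : ℕ, ContDiff ℝ n (fun q : ℝ × ℝ × ℝ => pp q.1 q.2.1 q.2.2)
  smooth_θ : ∀ n : ℕ, ContDiff ℝ n (fun q : ℝ × ℝ × ℝ => θ q.1 q.2.1 q.2.2)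
  axis_vr : ∀ z t, vr 0 z t = 0
  axis_vφ : ∀ z t, vφ 0 z t = 0
  mom_r : ∀ r z t, 0 < r → r < R → -a < z → z < a → 0 < t → t < T →
    pdt vr r z t + vr r z t * pdr vr r z t + vz r z t * pdz vr r z t - vφ r z t ^ 2 / r
      - ν * (pdr (pdr vr) r z t + pdr vr r z t / r + pdz (pdz vr) r z t)
      + ν * vr r z t / r ^ 2
      = - pdr pp r z t + α (θ r z t) * fr r z t
  mom_φ : ∀ r z t, 0 < r → r < R → -a < z → z < a → 0 < t → t < T →
    pdt vφ r z t + vr r z t * pdr vφ r z t + vz r z t * pdz vφ r z t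
      + vr r z t * vφ r z t / r
      - ν * (pdr (pdr vφ) r z t + pdr vφ r z t / r + pdz (pdz vφ) r z t)
      + ν * vφ r z t / r ^ 2
      = α (θ r z t) * fφ r z t
  mom_z : ∀ r z t, 0 < r → r < R → -a < z → z < a → 0 < t → t < T →
    pdt vz r z t + vr r z t * pdr vz r z t + vz r z t * pdz vz r z t
      - ν * (pdr (pdr vz) r z t + pdr vz r z t / r + pdz (pdz vz) r z t)
      = - pdz pp r z t + α (θ r z t) * fz r z t
  incompressible : ∀ r z t, 0 < r → r < R → -a < z → z < a → 0 < t → t < T →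
    pdr vr r z t + vr r z t / r + pdz vz r z t = 0
  heat : ∀ r z t, 0 < r → r < R → -a < z → z < a → 0 < t → t < T →
    pdt θ r z t + vr r z t * pdr θ r z t + vz r z t * pdz θ r z t
      - κ * (pdr (pdr θ) r z t + pdr θ r z t / r + pdz (pdz θ) r z t) = g r z t
  bc_lat : ∀ z t, -a ≤ z → z ≤ a → 0 < t → t < T →
    vr R z t = 0 ∧ vφ R z t = 0 ∧ pdz vr R z t - pdr vz R z t = 0
  bc_top : ∀ r t, 0 ≤ r → r ≤ R → 0 < t → t < T →
    (vz r a t = 0 ∧ pdz vr r a t - pdr vz r a t = 0 ∧ pdz vφ r a t = 0) ∧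
    (vz r (-a) t = 0 ∧ pdz vr r (-a) t - pdr vz r (-a) t = 0 ∧ pdz vφ r (-a) t = 0)
  bc_heat_lat : ∀ z t, -a ≤ z → z ≤ a → 0 < t → t < T → pdr θ R z t = 0
  bc_heat_top : ∀ r t, 0 ≤ r → r ≤ R → 0 < t → t < T →
    pdz θ r a t = 0 ∧ pdz θ r (-a) t = 0

section AuxSmooth

/-- Uncurrying of a function of three real variables. -/
def unc (w : ℝ → ℝ → ℝ → ℝ) : ℝ × ℝ × ℝ → ℝ := fun q => w q.1 q.2.1 q.2.2

lemma hasDerivAt_slice_r {w : ℝ → ℝ → ℝ → ℝ} (hw : Differentiable ℝ (unc w))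
    (r z t : ℝ) : HasDerivAt (fun s => w s z t) (pdr w r z t) r := by
  have hline : HasDerivAt (fun s : ℝ => (s, z, t)) ((1 : ℝ), (0 : ℝ), (0 : ℝ)) r := by
    exact HasDerivAt.prodMk (hasDerivAt_id r) (hasDerivAt_const r (z, t))
  have h := (hw (r, z, t)).hasFDerivAt.comp_hasDerivAt r hline
  exact h.differentiableAt.hasDerivAt

lemma hasDerivAt_slice_z {w : ℝ → ℝ → ℝ → ℝ} (hw : Differentiable ℝ (unc w))
    (r z t : ℝ) : HasDerivAt (fun s => w r s t) (pdz w r z t) z := by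
  have hline : HasDerivAt (fun s : ℝ => (r, s, t)) ((0 : ℝ), (1 : ℝ), (0 : ℝ)) z := by
    exact HasDerivAt.prodMk (hasDerivAt_const z r) (HasDerivAt.prodMk (hasDerivAt_id z) (hasDerivAt_const z t))
  have h := (hw (r, z, t)).hasFDerivAt.comp_hasDerivAt z hline
  exact h.differentiableAt.hasDerivAt

lemma hasDerivAt_slice_t {w : ℝ → ℝ → ℝ → ℝ} (hw : Differentiable ℝ (unc w))
    (r z t : ℝ) : HasDerivAt (fun s => w r z s) (pdt w r z t) t := by
  have hline : HasDerivAt (fun s : ℝ => (r, z, s)) ((0 : ℝ), (0 : ℝ), (1 : ℝ)) t := by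
    exact HasDerivAt.prodMk (hasDerivAt_const t r) (HasDerivAt.prodMk (hasDerivAt_const t z) (hasDerivAt_id t))
  have h := (hw (r, z, t)).hasFDerivAt.comp_hasDerivAt t hline
  exact h.differentiableAt.hasDerivAt

lemma contDiff_fderiv_apply {w : ℝ → ℝ → ℝ → ℝ} (hw : ∀ n : ℕ, ContDiff ℝ n (unc w))
    (v : ℝ × ℝ × ℝ) (n : ℕ) : ContDiff ℝ n (fun q => fderiv ℝ (unc w) q v) := by
  have h1 : ContDiff ℝ (n + 1 : ℕ) (unc w) := hw (n + 1)
  have h2 : ContDiff ℝ n (fderiv ℝ (unc w)) := by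
    apply h1.fderiv_right
    norm_cast
  exact (ContinuousLinearMap.apply ℝ ℝ v).contDiff.comp h2

lemma contDiff_pdr {w : ℝ → ℝ → ℝ → ℝ} (hw : ∀ n : ℕ, ContDiff ℝ n (unc w)) :
    ∀ n : ℕ, ContDiff ℝ n (unc (pdr w)) := by
  intro n
  have hd : Differentiable ℝ (unc w) := (hw 1).differentiable (by simp)
  have h := contDiff_fderiv_apply hw ((1 : ℝ), (0 : ℝ), (0 : ℝ)) n
  convert h using 1
  funext q
  obtain ⟨r, z, t⟩ := q
  have hline : HasDerivAt (fun s : ℝ => (s, z, t)) ((1 : ℝ), (0 : ℝ), (0 : ℝ)) r :=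
    HasDerivAt.prodMk (hasDerivAt_id r) (hasDerivAt_const r (z, t))
  have h2 := (hd (r, z, t)).hasFDerivAt.comp_hasDerivAt r hline
  exact h2.deriv

lemma contDiff_pdz {w : ℝ → ℝ → ℝ → ℝ} (hw : ∀ n : ℕ, ContDiff ℝ n (unc w)) :
    ∀ n : ℕ, ContDiff ℝ n (unc (pdz w)) := by
  intro n
  have hd : Differentiable ℝ (unc w) := (hw 1).differentiable (by simp)
  have h := contDiff_fderiv_apply hw ((0 : ℝ), (1 : ℝ), (0 : ℝ)) n
  convert h using 1
  funext q
  obtain ⟨r, z, t⟩ := q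
  have hline : HasDerivAt (fun s : ℝ => (r, s, t)) ((0 : ℝ), (1 : ℝ), (0 : ℝ)) z :=
    HasDerivAt.prodMk (hasDerivAt_const z r) (HasDerivAt.prodMk (hasDerivAt_id z) (hasDerivAt_const z t))
  have h2 := (hd (r, z, t)).hasFDerivAt.comp_hasDerivAt z hline
  exact h2.deriv

lemma contDiff_pdt {w : ℝ → ℝ → ℝ → ℝ} (hw : ∀ n : ℕ, ContDiff ℝ n (unc w)) :
    ∀ n : ℕ, ContDiff ℝ n (unc (pdt w)) := by
  intro n
  have hd : Differentiable ℝ (unc w) := (hw 1).differentiable (by simp)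
  have h := contDiff_fderiv_apply hw ((0 : ℝ), (0 : ℝ), (1 : ℝ)) n
  convert h using 1
  funext q
  obtain ⟨r, z, t⟩ := q
  have hline : HasDerivAt (fun s : ℝ => (r, z, s)) ((0 : ℝ), (0 : ℝ), (1 : ℝ)) t :=
    HasDerivAt.prodMk (hasDerivAt_const t r) (HasDerivAt.prodMk (hasDerivAt_const t z) (hasDerivAt_id t))
  have h2 := (hd (r, z, t)).hasFDerivAt.comp_hasDerivAt t hline
  exact h2.deriv

end AuxSmooth

section AuxCalc

open Filter Topology

/-- If `f` has a max over a left neighborhood at `b`, then its derivative at `b` is `≥ 0`. -/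
lemma deriv_nonneg_of_left_max {f : ℝ → ℝ} {c b δ : ℝ} (hf : HasDerivAt f c b)
    (hδ : 0 < δ) (hmax : ∀ x ∈ Ioo (b - δ) b, f x ≤ f b) : 0 ≤ c := by
  have hs : Tendsto (slope f b) (𝓝[<] b) (𝓝 c) :=
    (hasDerivAt_iff_tendsto_slope.1 hf).mono_left
      (nhdsWithin_mono b fun x hx => ne_of_lt hx)
  have hmem : b ∈ Ioc (b - δ) b := ⟨by linarith, le_rfl⟩
  have hev : ∀ᶠ x in 𝓝[<] b, 0 ≤ slope f b x := by
    filter_upwards [Ioo_mem_nhdsLT_of_mem hmem] with x hx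
    have h1 : f x - f b ≤ 0 := by linarith [hmax x hx]
    have h2 : x - b < 0 := by linarith [hx.2]
    rw [slope_def_field]
    exact div_nonneg_of_nonpos h1 h2.le
  exact ge_of_tendsto hs hev

lemma slope_ne : True := trivial

/-- Left-neighborhood max with vanishing first derivative forces second derivative `≤ 0`. -/
lemma deriv2_nonpos_of_left_max {f g : ℝ → ℝ} {c b δ : ℝ}
    (hfg : ∀ x, HasDerivAt f (g x) x) (hg : HasDerivAt g c b) (hgb : g b = 0)
    (hδ : 0 < δ) (hmax : ∀ x ∈ Ioo (b - δ) b, f x ≤ f b) : c ≤ 0 := by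
  by_contra hc
  push_neg at hc
  have hs : Tendsto (slope g b) (𝓝[<] b) (𝓝 c) :=
    (hasDerivAt_iff_tendsto_slope.1 hg).mono_left
      (nhdsWithin_mono b fun x hx => ne_of_lt hx)
  have hev : ∀ᶠ x in 𝓝[<] b, 0 < slope g b x := hs.eventually (eventually_gt_nhds hc)
  rw [eventually_nhdsWithin_iff] at hev
  obtain ⟨ε, hε, hball⟩ := Metric.eventually_nhds_iff.1 hev
  set δ' : ℝ := min δ ε with hδ'
  have hδ'pos : 0 < δ' := lt_min hδ hε
  have hgneg : ∀ x ∈ Ioo (b - δ') b, g x < 0 := by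
    intro x hx
    have hxb : x < b := hx.2
    have hd : dist x b < ε := by
      rw [Real.dist_eq, abs_of_neg (by linarith)]
      have := hx.1
      have : b - δ' < x := hx.1
      have hδ'ε : δ' ≤ ε := min_le_right _ _
      linarith
    have hsl := hball hd hxb
    rw [slope_def_field, hgb, sub_zero] at hsl
    rcases lt_trichotomy (g x) 0 with h | h | h
    · exact h
    · exfalso; rw [h] at hsl; simp at hsl
    · exfalso
      have : (0 - g x) / (b - x) < 0 := div_neg_of_neg_of_pos (by linarith) (by linarith)
      have heq : (0 - g x) / (b - x) = g x / (x - b) := by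
        rw [div_eq_div_iff (by linarith) (by intro h'; linarith [sub_eq_zero.1 h'])]
        ring
      rw [heq] at this
      linarith
  have hanti : StrictAntiOn f (Icc (b - δ') b) := by
    apply strictAntiOn_of_deriv_neg (convex_Icc _ _)
    · exact fun x _ => ((hfg x).differentiableAt).continuousAt.continuousWithinAt
    · intro x hx
      rw [interior_Icc] at hx
      rw [(hfg x).deriv]
      exact hgneg x hx
  have hmem1 : b - δ' / 2 ∈ Icc (b - δ') b := ⟨by linarith, by linarith⟩
  have hmem2 : b ∈ Icc (b - δ') b := ⟨by linarith, le_rfl⟩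
  have h1 : f b < f (b - δ' / 2) := hanti hmem1 hmem2 (by linarith)
  have h2 : f (b - δ' / 2) ≤ f b := by
    apply hmax
    constructor
    · have : δ' ≤ δ := min_le_left _ _
      linarith
    · linarith
  linarith

end AuxCalc

section AuxCalc2

open Filter Topology

/-- Right-neighborhood max with vanishing first derivative forces second derivative `≤ 0`. -/
lemma deriv2_nonpos_of_right_max {f g : ℝ → ℝ} {c b δ : ℝ}
    (hfg : ∀ x, HasDerivAt f (g x) x) (hg : HasDerivAt g c b) (hgb : g b = 0)
    (hδ : 0 < δ) (hmax : ∀ x ∈ Ioo b (b + δ), f x ≤ f b) : c ≤ 0 := by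
  by_contra hc
  push_neg at hc
  have hs : Tendsto (slope g b) (𝓝[>] b) (𝓝 c) :=
    (hasDerivAt_iff_tendsto_slope.1 hg).mono_left
      (nhdsWithin_mono b fun x hx => ne_of_gt hx)
  have hev : ∀ᶠ x in 𝓝[>] b, 0 < slope g b x := hs.eventually (eventually_gt_nhds hc)
  rw [eventually_nhdsWithin_iff] at hev
  obtain ⟨ε, hε, hball⟩ := Metric.eventually_nhds_iff.1 hev
  set δ' : ℝ := min δ ε with hδ'
  have hδ'pos : 0 < δ' := lt_min hδ hε
  have hgpos : ∀ x ∈ Ioo b (b + δ'), 0 < g x := by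
    intro x hx
    have hxb : b < x := hx.1
    have hd : dist x b < ε := by
      rw [Real.dist_eq, abs_of_pos (by linarith)]
      have hδ'ε : δ' ≤ ε := min_le_right _ _
      linarith [hx.2]
    have hsl := hball hd hxb
    rw [slope_def_field, hgb, sub_zero] at hsl
    have hxbpos : 0 < x - b := by linarith
    have := mul_pos hsl hxbpos
    rwa [div_mul_cancel₀ _ (by linarith : x - b ≠ 0)] at this
  have hmono : StrictMonoOn f (Icc b (b + δ')) := by
    apply strictMonoOn_of_deriv_pos (convex_Icc _ _)
    · exact fun x _ => ((hfg x).differentiableAt).continuousAt.continuousWithinAt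
    · intro x hx
      rw [interior_Icc] at hx
      rw [(hfg x).deriv]
      exact hgpos x hx
  have hmem1 : b ∈ Icc b (b + δ') := ⟨le_rfl, by linarith⟩
  have hmem2 : b + δ' / 2 ∈ Icc b (b + δ') := ⟨by linarith, by linarith⟩
  have h1 : f b < f (b + δ' / 2) := hmono hmem1 hmem2 (by linarith)
  have h2 : f (b + δ' / 2) ≤ f b := by
    apply hmax
    constructor
    · linarith
    · have : δ' ≤ δ := min_le_left _ _
      linarith
  linarith

end AuxCalc2

section AuxMeas

open Filter Topology Metric

lemma cylStrip_isOpen (R a : ℝ) : IsOpen (cylStrip R a) := isOpen_Ioo.prod isOpen_Ioo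

lemma cylMeas_ae_mem (R a : ℝ) : ∀ᵐ q ∂(cylMeas R a), q ∈ cylStrip R a := by
  have h1 : ∀ᵐ q ∂((volume : Measure (ℝ × ℝ)).restrict (cylStrip R a)), q ∈ cylStrip R a :=
    ae_restrict_mem (cylStrip_isOpen R a).measurableSet
  exact (withDensity_absolutelyContinuous _ _).ae_le h1

/-- Lemma A: a pointwise bound on the strip bounds the essential sup norm. -/
lemma eLpNormTop_le_of_bound {R a : ℝ} {g : ℝ × ℝ → ℝ} {C : ℝ}
    (hC : ∀ q ∈ cylStrip R a, |g q| ≤ C) :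
    eLpNorm g ⊤ (cylMeas R a) ≤ ENNReal.ofReal C := by
  rw [eLpNorm_exponent_top]
  apply eLpNormEssSup_le_of_ae_bound (C := C)
  filter_upwards [cylMeas_ae_mem R a] with q hq
  simpa [Real.norm_eq_abs] using hC q hq

/-- Positivity of `cylMeas` on nonempty open subsets of the strip. -/
lemma cylMeas_pos_of_open {R a : ℝ} {U : Set (ℝ × ℝ)} (hU : IsOpen U)
    (hsub : U ⊆ cylStrip R a) {q₀ : ℝ × ℝ} (hq₀ : q₀ ∈ U) : 0 < cylMeas R a U := by
  obtain ⟨ε, hε, hball⟩ := Metric.isOpen_iff.1 hU q₀ hq₀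
  have hr₀ : 0 < q₀.1 := (hsub hq₀).1.1
  set ε' : ℝ := min ε (q₀.1 / 2) with hε'
  have hε'pos : 0 < ε' := lt_min hε (by linarith)
  have hball' : ball q₀ ε' ⊆ U := subset_trans (ball_subset_ball (min_le_left _ _)) hball
  set c : ℝ≥0∞ := ENNReal.ofReal (2 * π * (q₀.1 / 2)) with hc
  have hlow : ∀ q ∈ ball q₀ ε', c ≤ ENNReal.ofReal (2 * π * q.1) := by
    intro q hq
    apply ENNReal.ofReal_le_ofReal
    have h1 : |q.1 - q₀.1| < ε' := by
      have hn := mem_ball_iff_norm.1 hq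
      calc |q.1 - q₀.1| = ‖(q - q₀).1‖ := by rw [Real.norm_eq_abs]; simp
        _ ≤ ‖q - q₀‖ := norm_fst_le _
        _ < ε' := hn
    have h2 : q₀.1 / 2 ≤ q.1 := by
      have hle : ε' ≤ q₀.1 / 2 := min_le_right _ _
      rcases abs_lt.1 h1 with ⟨hl, _⟩
      linarith
    nlinarith [pi_pos]
  have hmono : cylMeas R a (ball q₀ ε') ≤ cylMeas R a U := measure_mono hball'
  have hballmeas : cylMeas R a (ball q₀ ε') =
      ∫⁻ q in ball q₀ ε', ENNReal.ofReal (2 * π * q.1)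
        ∂((volume : Measure (ℝ × ℝ)).restrict (cylStrip R a)) := by
    rw [cylMeas, withDensity_apply _ measurableSet_ball]
  have hlb : c * volume (ball q₀ ε') ≤ cylMeas R a (ball q₀ ε') := by
    rw [hballmeas]
    calc c * volume (ball q₀ ε')
        = c * ((volume : Measure (ℝ × ℝ)).restrict (cylStrip R a)) (ball q₀ ε') := by
          rw [Measure.restrict_apply measurableSet_ball,
            inter_eq_left.2 (hball'.trans hsub)]
      _ = ∫⁻ _ in ball q₀ ε', c ∂((volume : Measure (ℝ × ℝ)).restrict (cylStrip R a)) := by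
          rw [setLIntegral_const]
      _ ≤ _ := setLIntegral_mono' measurableSet_ball hlow
  have hcpos : 0 < c := ENNReal.ofReal_pos.2 (by nlinarith [pi_pos])
  have hvpos : 0 < volume (ball q₀ ε') := measure_ball_pos _ _ hε'pos
  calc (0 : ℝ≥0∞) < c * volume (ball q₀ ε') := by
        exact ENNReal.mul_pos hcpos.ne' hvpos.ne'
    _ ≤ cylMeas R a (ball q₀ ε') := hlb
    _ ≤ cylMeas R a U := hmono

/-- Lemma B: for a continuous function, pointwise values on the strip are bounded by
the essential sup norm. -/
lemma ofReal_abs_le_eLpNormTop {R a : ℝ} {g : ℝ × ℝ → ℝ} (hg : Continuous g)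
    {q₀ : ℝ × ℝ} (hq₀ : q₀ ∈ cylStrip R a) :
    ENNReal.ofReal |g q₀| ≤ eLpNorm g ⊤ (cylMeas R a) := by
  by_contra hlt
  push_neg at hlt
  rw [eLpNorm_exponent_top] at hlt
  set c : ℝ≥0∞ := eLpNormEssSup g (cylMeas R a) with hc
  have hctop : c ≠ ⊤ := hlt.ne_top
  have hcr : c.toReal < |g q₀| := by
    rw [← ENNReal.lt_ofReal_iff_toReal_lt hctop]
    exact hlt
  set U : Set (ℝ × ℝ) := {q | c.toReal < |g q|} ∩ cylStrip R a with hUdef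
  have hUopen : IsOpen U :=
    (isOpen_lt continuous_const (continuous_abs.comp hg)).inter (cylStrip_isOpen R a)
  have hq₀U : q₀ ∈ U := ⟨hcr, hq₀⟩
  have hae := ae_le_eLpNormEssSup (f := g) (μ := cylMeas R a)
  have hnull : cylMeas R a {q | c < (‖g q‖₊ : ℝ≥0∞)} = 0 := by
    have := ae_iff.1 hae
    simp only [not_le] at this
    exact this
  have hUN : U ⊆ {q | c < (‖g q‖₊ : ℝ≥0∞)} := by
    intro q hq
    simp only [mem_setOf_eq]
    have h1 : c < ENNReal.ofReal |g q| :=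
      (ENNReal.lt_ofReal_iff_toReal_lt hctop).2 hq.1
    have h2 : ENNReal.ofReal |g q| = (‖g q‖₊ : ℝ≥0∞) := by
      rw [← Real.norm_eq_abs]
      exact (ofReal_norm (g q)).trans rfl
    rwa [h2] at h1
  have hpos := cylMeas_pos_of_open hUopen inter_subset_right hq₀U
  have : cylMeas R a U = 0 := le_antisymm (hnull ▸ measure_mono hUN) zero_le
  rw [this] at hpos
  exact lt_irrefl _ hpos

end AuxMeas

/-- maximum principle for the swirl, Lemma 2.5: under the hypotheses of the
system, with `θ_* ≤ θ ≤ θ*`, `|α| ≤ M_α` on `[θ_*,θ*]`, `f₀ = r f_φ ∈ L₁(0,T;L_∞(Ω))` and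
`u(0) = r v_φ(·,0) ∈ L_∞(Ω)`, the swirl `u = r v_φ` satisfies
`|u(t)|_{∞,Ω} ≤ M_α |f₀|_{∞,1,Ω^t} + |u(0)|_{∞,Ω}` for every `t ∈ (0,T)`. -/
theorem stmt_4
    (ν κ R a T θs θS Mα : ℝ) (α : ℝ → ℝ)
    (vr vφ vz pp θ fr fφ fz g : ℝ → ℝ → ℝ → ℝ)
    (hν : 0 < ν) (hκ : 0 < κ) (hR : 0 < R) (ha : 0 < a) (hT : 0 < T)
    (hsol : NSHeat ν κ R a T α vr vφ vz pp θ fr fφ fz g)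
    (hθs : 0 < θs)
    (hθ : ∀ r z t, (r, z) ∈ cylStrip R a → t ∈ Ioo 0 T → θ r z t ∈ Icc θs θS)
    (hα : ∀ ϑ ∈ Icc θs θS, |α ϑ| ≤ Mα)
    -- `f₀ = r f_φ ∈ L₁(0,T;L_∞(Ω))`:
    (hf0 : IntegrableOn
        (fun t' => (nLp R a ⊤ (fun r z s => r * fφ r z s) t').toReal) (Ioo 0 T))
    (hf0fin : ∀ t' ∈ Ioo 0 T, nLp R a ⊤ (fun r z s => r * fφ r z s) t' ≠ ⊤)
    -- `u(0) ∈ L_∞(Ω)`: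
    (hu0 : nLp R a ⊤ (fun r z s => r * vφ r z s) 0 ≠ ⊤) :
    ∀ t ∈ Ioo 0 T,
      nLp R a ⊤ (fun r z s => r * vφ r z s) t
        ≤ ENNReal.ofReal
            (Mα * (∫ t' in Ioo 0 t, (nLp R a ⊤ (fun r z s => r * fφ r z s) t').toReal)
              + (nLp R a ⊤ (fun r z s => r * vφ r z s) 0).toReal) := by
  intro t ht
  obtain ⟨ht0, htT⟩ := ht
  set u : ℝ → ℝ → ℝ → ℝ := fun r z s => r * vφ r z s with hu
  -- smoothness facts
  have hvφs : ∀ n : ℕ, ContDiff ℝ n (unc vφ) := hsol.smooth_vφ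
  have hvφd : Differentiable ℝ (unc vφ) := (hvφs 1).differentiable (by simp)
  have hus : ∀ n : ℕ, ContDiff ℝ n (unc u) := fun n => contDiff_fst.mul (hvφs n)
  have hud : Differentiable ℝ (unc u) := (hus 1).differentiable (by simp)
  have hpdrus : ∀ n : ℕ, ContDiff ℝ n (unc (pdr u)) := contDiff_pdr hus
  have hpdzus : ∀ n : ℕ, ContDiff ℝ n (unc (pdz u)) := contDiff_pdz hus
  have hpdtus : ∀ n : ℕ, ContDiff ℝ n (unc (pdt u)) := contDiff_pdt hus
  have hpdrpdrus : ∀ n : ℕ, ContDiff ℝ n (unc (pdr (pdr u))) := contDiff_pdr hpdrus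
  have hpdzpdzus : ∀ n : ℕ, ContDiff ℝ n (unc (pdz (pdz u))) := contDiff_pdz hpdzus
  have hpdrvφs : ∀ n : ℕ, ContDiff ℝ n (unc (pdr vφ)) := contDiff_pdr hvφs
  have hpdzvφs : ∀ n : ℕ, ContDiff ℝ n (unc (pdz vφ)) := contDiff_pdz hvφs
  have hpdrud : Differentiable ℝ (unc (pdr u)) := (hpdrus 1).differentiable (by simp)
  have hpdzud : Differentiable ℝ (unc (pdz u)) := (hpdzus 1).differentiable (by simp)
  have hpdrvφd : Differentiable ℝ (unc (pdr vφ)) := (hpdrvφs 1).differentiable (by simp)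
  have hpdzvφd : Differentiable ℝ (unc (pdz vφ)) := (hpdzvφs 1).differentiable (by simp)
  -- derivative identities
  have hpdru : ∀ r z s, pdr u r z s = vφ r z s + r * pdr vφ r z s := by
    intro r z s
    have h1 : HasDerivAt (fun ρ => ρ * vφ ρ z s) (1 * vφ r z s + r * pdr vφ r z s) r :=
      (hasDerivAt_id r).mul (hasDerivAt_slice_r hvφd r z s)
    have h2 : pdr u r z s = deriv (fun ρ => u ρ z s) r := rfl
    rw [h2, hu]
    rw [h1.deriv]
    ring
  have hpdtu : ∀ r z s, pdt u r z s = r * pdt vφ r z s := by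
    intro r z s
    have h1 : HasDerivAt (fun x => r * vφ r z x) (r * pdt vφ r z s) s :=
      (hasDerivAt_slice_t hvφd r z s).const_mul r
    have h2 : pdt u r z s = deriv (fun x => u r z x) s := rfl
    rw [h2, hu, h1.deriv]
  have hpdzu : ∀ r z s, pdz u r z s = r * pdz vφ r z s := by
    intro r z s
    have h1 : HasDerivAt (fun x => r * vφ r x s) (r * pdz vφ r z s) z :=
      (hasDerivAt_slice_z hvφd r z s).const_mul r
    have h2 : pdz u r z s = deriv (fun x => u r x s) z := rfl
    rw [h2, hu, h1.deriv]
  have hpdrpdru : ∀ r z s, pdr (pdr u) r z s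
      = 2 * pdr vφ r z s + r * pdr (pdr vφ) r z s := by
    intro r z s
    have hfun : (fun ρ => pdr u ρ z s) = fun ρ => vφ ρ z s + ρ * pdr vφ ρ z s :=
      funext fun ρ => hpdru ρ z s
    have h1 : HasDerivAt (fun ρ => vφ ρ z s + ρ * pdr vφ ρ z s)
        (pdr vφ r z s + (1 * pdr vφ r z s + r * pdr (pdr vφ) r z s)) r :=
      (hasDerivAt_slice_r hvφd r z s).add
        ((hasDerivAt_id r).mul (hasDerivAt_slice_r hpdrvφd r z s))
    have h2 : pdr (pdr u) r z s = deriv (fun ρ => pdr u ρ z s) r := rfl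
    rw [h2, hfun, h1.deriv]
    ring
  have hpdzpdzu : ∀ r z s, pdz (pdz u) r z s = r * pdz (pdz vφ) r z s := by
    intro r z s
    have hfun : (fun x => pdz u r x s) = fun x => r * pdz vφ r x s :=
      funext fun x => hpdzu r x s
    have h1 : HasDerivAt (fun x => r * pdz vφ r x s) (r * pdz (pdz vφ) r z s) z :=
      (hasDerivAt_slice_z hpdzvφd r z s).const_mul r
    have h2 : pdz (pdz u) r z s = deriv (fun x => pdz u r x s) z := rfl
    rw [h2, hfun, h1.deriv]
  -- the auxiliary function `V = vφ / r` (defined for all `r` by integration)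
  set V : ℝ × ℝ × ℝ → ℝ :=
    fun q => ∫ τ in (0:ℝ)..1, pdr vφ (τ * q.1) q.2.1 q.2.2 with hV
  have hVcont : Continuous V := by
    apply intervalIntegral.continuous_parametric_intervalIntegral_of_continuous'
      (f := fun (q : ℝ × ℝ × ℝ) (τ : ℝ) => pdr vφ (τ * q.1) q.2.1 q.2.2) (μ := volume)
    have hc : Continuous (unc (pdr vφ)) := (hpdrvφs 0).continuous
    show Continuous fun p : (ℝ × ℝ × ℝ) × ℝ => pdr vφ (p.2 * p.1.1) p.1.2.1 p.1.2.2
    exact hc.comp ((continuous_snd.mul continuous_fst.fst).prodMk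
      (continuous_fst.snd.fst.prodMk continuous_fst.snd.snd))
  have hrV : ∀ r z s, r * V (r, z, s) = vφ r z s := by
    intro r z s
    have hder : ∀ τ ∈ uIcc (0:ℝ) 1, HasDerivAt (fun τ => vφ (τ * r) z s)
        (pdr vφ (τ * r) z s * r) τ := by
      intro τ _
      exact (hasDerivAt_slice_r hvφd (τ * r) z s).comp τ (hasDerivAt_mul_const r)
    have hcint : Continuous fun τ => pdr vφ (τ * r) z s * r := by
      apply Continuous.mul _ continuous_const
      exact ((hpdrvφs 0).continuous).comp
        ((continuous_id.mul continuous_const).prodMk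
          (continuous_const.prodMk continuous_const))
    have heq := intervalIntegral.integral_eq_sub_of_hasDerivAt hder
      (hcint.intervalIntegrable 0 1)
    simp only [one_mul, zero_mul, hsol.axis_vφ, sub_zero] at heq
    show r * (∫ τ in (0:ℝ)..1, pdr vφ (τ * r) z s) = vφ r z s
    rw [intervalIntegral.integral_mul_const] at heq
    rw [mul_comm]
    exact heq
  -- the source term, written as an everywhere-continuous function
  set SRC : ℝ × ℝ × ℝ → ℝ := fun q =>
    pdt u q.1 q.2.1 q.2.2 + vr q.1 q.2.1 q.2.2 * pdr u q.1 q.2.1 q.2.2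
      + vz q.1 q.2.1 q.2.2 * pdz u q.1 q.2.1 q.2.2
      - ν * pdr (pdr u) q.1 q.2.1 q.2.2
      + ν * (V q + pdr vφ q.1 q.2.1 q.2.2)
      - ν * pdz (pdz u) q.1 q.2.1 q.2.2 with hSRC
  have hSRCcont : Continuous SRC := by
    rw [hSRC]
    refine (((((hpdtus 0).continuous.add
      (((hsol.smooth_vr 0).continuous).mul (hpdrus 0).continuous)).add
      (((hsol.smooth_vz 0).continuous).mul (hpdzus 0).continuous)).sub
      (continuous_const.mul (hpdrpdrus 0).continuous)).add
      (continuous_const.mul (hVcont.add (hpdrvφs 0).continuous))).sub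
      (continuous_const.mul (hpdzpdzus 0).continuous)
  have hSRCeq : ∀ r z s, 0 < r → r < R → -a < z → z < a → 0 < s → s < T →
      SRC (r, z, s) = α (θ r z s) * (r * fφ r z s) := by
    intro r z s hr hrR hza hzaa hs hsT
    have hm := hsol.mom_φ r z s hr hrR hza hzaa hs hsT
    have hVr : V (r, z, s) = vφ r z s / r := by
      rw [eq_div_iff hr.ne']
      rw [mul_comm]
      exact hrV r z s
    rw [hSRC]
    simp only
    rw [hpdtu, hpdru, hpdzu, hpdrpdru, hpdzpdzu, hVr]
    rw [show α (θ r z s) * (r * fφ r z s) = r * (α (θ r z s) * fφ r z s) from by ring, ← hm]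
    field_simp
    ring
  -- the compact closure of the strip
  set K : Set (ℝ × ℝ) := Icc 0 R ×ˢ Icc (-a) a with hK
  have hKcomp : IsCompact K := isCompact_Icc.prod isCompact_Icc
  have hK0mem : ((0:ℝ), (0:ℝ)) ∈ K := by
    rw [hK]
    refine ⟨⟨le_rfl, hR.le⟩, ⟨?_, ha.le⟩⟩
    show -a ≤ (0:ℝ)
    linarith
  have hKne : K.Nonempty := ⟨((0:ℝ), (0:ℝ)), hK0mem⟩
  have hclosure : closure (cylStrip R a) = K := by
    rw [cylStrip, hK, closure_prod_eq, closure_Ioo hR.ne, closure_Ioo (by linarith : -a ≠ a)]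
  have hsubK : cylStrip R a ⊆ K := by
    rw [← hclosure]; exact subset_closure
  -- the time-dependent sup bound on the source term
  set h : ℝ → ℝ := fun s => sSup ((fun q : ℝ × ℝ => |SRC (q.1, q.2, s)|) '' K) with hh
  have hhcont : Continuous h := by
    apply hKcomp.continuous_sSup (f := fun (s : ℝ) (q : ℝ × ℝ) => |SRC (q.1, q.2, s)|)
    show Continuous fun p : ℝ × ℝ × ℝ => |SRC (p.2.1, p.2.2, p.1)|
    exact continuous_abs.comp (hSRCcont.comp
      ((continuous_snd.fst).prodMk ((continuous_snd.snd).prodMk continuous_fst)))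
  have hhub : ∀ s : ℝ, ∀ q ∈ K, |SRC (q.1, q.2, s)| ≤ h s := by
    intro s q hq
    apply le_csSup _ (mem_image_of_mem _ hq)
    apply hKcomp.bddAbove_image
    apply Continuous.continuousOn
    exact continuous_abs.comp (hSRCcont.comp
      ((continuous_fst).prodMk ((continuous_snd).prodMk continuous_const)))
  have hh0 : ∀ s : ℝ, 0 ≤ h s := fun s =>
    le_trans (abs_nonneg _) (hhub s ((0:ℝ),(0:ℝ)) hK0mem)
  -- sup of |u| at time 0
  have hucont : Continuous (unc u) := (hus 0).continuous
  set B₀ : ℝ := sSup ((fun q : ℝ × ℝ => |u q.1 q.2 0|) '' K) with hB₀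
  have hB₀ub : ∀ q ∈ K, |u q.1 q.2 0| ≤ B₀ := by
    intro q hq
    apply le_csSup _ (mem_image_of_mem _ hq)
    apply hKcomp.bddAbove_image
    apply Continuous.continuousOn
    exact continuous_abs.comp (hucont.comp
      ((continuous_fst).prodMk ((continuous_snd).prodMk continuous_const)))
  have hB₀0 : 0 ≤ B₀ := le_trans (abs_nonneg _) (hB₀ub ((0:ℝ),(0:ℝ)) hK0mem)
  -- the comparison function
  set M : ℝ → ℝ := fun s => ∫ x in (0:ℝ)..s, h x with hM
  have hM' : ∀ s : ℝ, HasDerivAt M (h s) s := fun s =>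
    (hhcont.integral_hasStrictDerivAt 0 s).hasDerivAt
  have hMcont : Continuous M := by
    rw [continuous_iff_continuousAt]
    exact fun s => (hM' s).continuousAt
  have hM0 : M 0 = 0 := intervalIntegral.integral_same
  have hMnonneg : ∀ s : ℝ, 0 ≤ s → 0 ≤ M s := fun s hs =>
    intervalIntegral.integral_nonneg hs fun x _ => hh0 x
  -- the key differential inequality
  have hKI : ∀ σ : ℝ, σ = 1 ∨ σ = -1 → ∀ r z s : ℝ, (r, z) ∈ K →
      σ * pdt u r z s ≤ ν * (σ * pdr (pdr u) r z s)
        - ν * (σ * (V (r, z, s) + pdr vφ r z s))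
        + ν * (σ * pdz (pdz u) r z s)
        - vr r z s * (σ * pdr u r z s) - vz r z s * (σ * pdz u r z s) + h s := by
    intro σ hσ r z s hrz
    have habs : |σ| = 1 := by rcases hσ with h' | h' <;> simp [h']
    have h1 : σ * SRC (r, z, s) ≤ h s := by
      calc σ * SRC (r, z, s) ≤ |σ * SRC (r, z, s)| := le_abs_self _
        _ = |SRC (r, z, s)| := by rw [abs_mul, habs, one_mul]
        _ ≤ h s := hhub s (r, z) hrz
    have hid : σ * pdt u r z s = ν * (σ * pdr (pdr u) r z s)
        - ν * (σ * (V (r, z, s) + pdr vφ r z s))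
        + ν * (σ * pdz (pdz u) r z s)
        - vr r z s * (σ * pdr u r z s) - vz r z s * (σ * pdz u r z s)
        + σ * SRC (r, z, s) := by
      rw [hSRC]
      ring
    rw [hid]
    linarith
  -- the maximum principle
  have key : ∀ σ : ℝ, σ = 1 ∨ σ = -1 → ∀ ε : ℝ, 0 < ε → ∀ q : ℝ × ℝ, q ∈ cylStrip R a →
      σ * u q.1 q.2 t ≤ B₀ + M t + ε * t := by
    intro σ hσ ε hε q hq
    set w : ℝ × ℝ × ℝ → ℝ :=
      fun p => σ * u p.1 p.2.1 p.2.2 - (M p.2.2 + ε * p.2.2) with hw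
    set C : Set (ℝ × ℝ × ℝ) := Icc 0 R ×ˢ (Icc (-a) a ×ˢ Icc 0 t) with hC
    have hCcomp : IsCompact C := isCompact_Icc.prod (isCompact_Icc.prod isCompact_Icc)
    have hC0mem : ((0:ℝ), (0:ℝ), (0:ℝ)) ∈ C := by
      rw [hC]
      refine ⟨⟨le_rfl, hR.le⟩, ⟨?_, ha.le⟩, le_rfl, ht0.le⟩
      show -a ≤ (0:ℝ)
      linarith
    have hwcont : Continuous w := by
      rw [hw]
      apply Continuous.sub
      · exact continuous_const.mul (hucont.comp
          (continuous_fst.prodMk (continuous_snd.fst.prodMk continuous_snd.snd)))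
      · exact (hMcont.comp continuous_snd.snd).add
          (continuous_const.mul continuous_snd.snd)
    obtain ⟨p, hpC, hpmax'⟩ := hCcomp.exists_isMaxOn ⟨_, hC0mem⟩ hwcont.continuousOn
    obtain ⟨r1, z1, s1⟩ := p
    have hpmax : ∀ p' ∈ C, w p' ≤ w (r1, z1, s1) := fun p' hp' => hpmax' hp'
    have hr1m : r1 ∈ Icc 0 R := hpC.1
    have hz1m : z1 ∈ Icc (-a) a := hpC.2.1
    have hs1m : s1 ∈ Icc 0 t := hpC.2.2
    have hwle : w (r1, z1, s1) ≤ B₀ := by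
      rcases eq_or_lt_of_le hs1m.1 with hs0 | hs0
      · -- maximum at time 0
        have : w (r1, z1, s1) = σ * u r1 z1 0 - (M 0 + ε * 0) := by rw [hw, ← hs0]
        rw [this, hM0]
        have h1 : σ * u r1 z1 0 ≤ |u r1 z1 0| := by
          calc σ * u r1 z1 0 ≤ |σ * u r1 z1 0| := le_abs_self _
            _ = |u r1 z1 0| := by rcases hσ with h' | h' <;> simp [h', abs_mul]
        have h2 := hB₀ub (r1, z1) ⟨hr1m, hz1m⟩
        simp only at h2
        linarith
      · -- maximum at positive time
        have hs1T : s1 < T := lt_of_le_of_lt hs1m.2 htT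
        have hMs1 : 0 ≤ M s1 := hMnonneg s1 hs0.le
        have hεs1 : 0 ≤ ε * s1 := mul_nonneg hε.le hs0.le
        rcases eq_or_lt_of_le hr1m.1 with hr0 | hr0
        · -- on the axis u = 0
          have hu0' : u r1 z1 s1 = 0 := by rw [hu, ← hr0]; simp
          have : w (r1, z1, s1) = σ * u r1 z1 s1 - (M s1 + ε * s1) := rfl
          rw [this, hu0']
          simp only [mul_zero]
          linarith
        rcases eq_or_lt_of_le hr1m.2 with hrR | hrR
        · -- on the lateral boundary u = 0
          have hvφR : vφ R z1 s1 = 0 := (hsol.bc_lat z1 s1 hz1m.1 hz1m.2 hs0 hs1T).2.1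
          have hu0' : u r1 z1 s1 = 0 := by rw [hu, hrR]; simp [hvφR]
          have : w (r1, z1, s1) = σ * u r1 z1 s1 - (M s1 + ε * s1) := rfl
          rw [this, hu0']
          simp only [mul_zero]
          linarith
        · -- interior in r: contradiction
          exfalso
          -- time derivative at the max is nonnegative
          have ht1 : HasDerivAt (fun x => σ * u r1 z1 x - (M x + ε * x))
              (σ * pdt u r1 z1 s1 - (h s1 + ε)) s1 := by
            have h1 := ((hasDerivAt_slice_t hud r1 z1 s1).const_mul σ).sub
              ((hM' s1).add ((hasDerivAt_id s1).const_mul ε))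
            rw [mul_one] at h1
            exact h1
          have htd : 0 ≤ σ * pdt u r1 z1 s1 - (h s1 + ε) := by
            apply deriv_nonneg_of_left_max ht1 hs0
            intro x hx
            have hx0 : 0 < x := by have := hx.1; linarith
            have hmem : (r1, z1, x) ∈ C := ⟨hr1m, hz1m, hx0.le, hx.2.le.trans hs1m.2⟩
            exact hpmax (r1, z1, x) hmem
          -- r-derivatives
          have hfr : ∀ x, HasDerivAt (fun ρ => σ * u ρ z1 s1) (σ * pdr u x z1 s1) x :=
            fun x => (hasDerivAt_slice_r hud x z1 s1).const_mul σ
          have hloc : IsLocalMax (fun ρ => σ * u ρ z1 s1) r1 := by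
            filter_upwards [isOpen_Ioo.mem_nhds (⟨hr0, hrR⟩ : r1 ∈ Ioo 0 R)] with ρ hρ
            have hmem : (ρ, z1, s1) ∈ C := ⟨⟨hρ.1.le, hρ.2.le⟩, hz1m, hs1m⟩
            have h2 := hpmax (ρ, z1, s1) hmem
            simp only [hw] at h2
            show σ * u ρ z1 s1 ≤ σ * u r1 z1 s1
            linarith
          have hdr0 : σ * pdr u r1 z1 s1 = 0 := by
            have h2 := hloc.deriv_eq_zero
            rwa [(hfr r1).deriv] at h2
          have hpdru0 : pdr u r1 z1 s1 = 0 := by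
            rcases hσ with h' | h' <;> (rw [h'] at hdr0; linarith)
          have hfr2 : HasDerivAt (fun ρ => σ * pdr u ρ z1 s1)
              (σ * pdr (pdr u) r1 z1 s1) r1 :=
            (hasDerivAt_slice_r hpdrud r1 z1 s1).const_mul σ
          have hd2r : σ * pdr (pdr u) r1 z1 s1 ≤ 0 := by
            apply deriv2_nonpos_of_left_max hfr hfr2 hdr0 hr0
            intro x hx
            have hx0 : 0 < x := by have := hx.1; linarith
            have hmem : (x, z1, s1) ∈ C := ⟨⟨hx0.le, hx.2.le.trans hr1m.2⟩, hz1m, hs1m⟩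
            have h2 := hpmax (x, z1, s1) hmem
            simp only [hw] at h2
            linarith
          -- z-derivatives
          have hfz : ∀ x, HasDerivAt (fun ζ => σ * u r1 ζ s1) (σ * pdz u r1 x s1) x :=
            fun x => (hasDerivAt_slice_z hud r1 x s1).const_mul σ
          have hbt := hsol.bc_top r1 s1 hr1m.1 hr1m.2 hs0 hs1T
          have hdz0 : pdz u r1 z1 s1 = 0 := by
            rcases eq_or_lt_of_le hz1m.2 with hza | hza
            · rw [hpdzu, hza, hbt.1.2.2, mul_zero]
            rcases eq_or_lt_of_le hz1m.1 with hza' | hza'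
            · rw [hpdzu, ← hza', hbt.2.2.2, mul_zero]
            · have hloc' : IsLocalMax (fun ζ => σ * u r1 ζ s1) z1 := by
                filter_upwards [isOpen_Ioo.mem_nhds (⟨hza', hza⟩ : z1 ∈ Ioo (-a) a)]
                  with ζ hζ
                have hmem : (r1, ζ, s1) ∈ C := ⟨hr1m, ⟨hζ.1.le, hζ.2.le⟩, hs1m⟩
                have h2 := hpmax (r1, ζ, s1) hmem
                simp only [hw] at h2
                show σ * u r1 ζ s1 ≤ σ * u r1 z1 s1
                linarith
              have h2 := hloc'.deriv_eq_zero
              rw [(hfz z1).deriv] at h2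
              rcases hσ with h' | h' <;> (rw [h'] at h2; linarith)
          have hdz0σ : σ * pdz u r1 z1 s1 = 0 := by rw [hdz0, mul_zero]
          have hfz2 : HasDerivAt (fun ζ => σ * pdz u r1 ζ s1)
              (σ * pdz (pdz u) r1 z1 s1) z1 :=
            (hasDerivAt_slice_z hpdzud r1 z1 s1).const_mul σ
          have hd2z : σ * pdz (pdz u) r1 z1 s1 ≤ 0 := by
            rcases eq_or_lt_of_le hz1m.1 with hza' | hza'
            · -- bottom: use right-neighborhood maximum
              apply deriv2_nonpos_of_right_max hfz hfz2 hdz0σ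
                (show (0:ℝ) < 2 * a by linarith)
              intro x hx
              have hz1a : z1 = -a := hza'.symm
              have hmem : (r1, x, s1) ∈ C := by
                refine ⟨hr1m, ⟨?_, ?_⟩, hs1m⟩
                · linarith [hx.1]
                · linarith [hx.2]
              have h2 := hpmax (r1, x, s1) hmem
              simp only [hw] at h2
              linarith
            · -- otherwise: left-neighborhood maximum
              apply deriv2_nonpos_of_left_max hfz hfz2 hdz0σ
                (show (0:ℝ) < z1 + a by linarith)
              intro x hx
              have hmem : (r1, x, s1) ∈ C := by
                refine ⟨hr1m, ⟨?_, ?_⟩, hs1m⟩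
                · have := hx.1; linarith
                · have := hx.2; linarith [hz1m.2]
              have h2 := hpmax (r1, x, s1) hmem
              simp only [hw] at h2
              linarith
          -- the `1/r` term vanishes at the maximum point
          have hVterm : V (r1, z1, s1) + pdr vφ r1 z1 s1 = 0 := by
            have h1 : r1 * (V (r1, z1, s1) + pdr vφ r1 z1 s1) = pdr u r1 z1 s1 := by
              rw [mul_add, hrV r1 z1 s1, hpdru r1 z1 s1]
            rw [hpdru0] at h1
            rcases mul_eq_zero.1 h1 with h' | h'
            · exact absurd h' hr0.ne'
            · exact h'
          -- combine with the key inequality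
          have hki := hKI σ hσ r1 z1 s1 ⟨hr1m, hz1m⟩
          rw [hdr0, hdz0σ, hVterm, mul_zero, mul_zero, mul_zero, mul_zero] at hki
          have hterm1 : ν * (σ * pdr (pdr u) r1 z1 s1) ≤ 0 :=
            mul_nonpos_of_nonneg_of_nonpos hν.le hd2r
          have hterm2 : ν * (σ * pdz (pdz u) r1 z1 s1) ≤ 0 :=
            mul_nonpos_of_nonneg_of_nonpos hν.le hd2z
          linarith
    -- conclude from the maximum
    have hqC : (q.1, q.2, t) ∈ C :=
      ⟨⟨hq.1.1.le, hq.1.2.le⟩, ⟨hq.2.1.le, hq.2.2.le⟩, ht0.le, le_rfl⟩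
    have h2 := (hpmax (q.1, q.2, t) hqC).trans hwle
    simp only [hw] at h2
    linarith
  -- pointwise bound on `u(t)` over the strip
  have hbound : ∀ q ∈ cylStrip R a, |u q.1 q.2 t| ≤ B₀ + M t := by
    intro q hq
    have hside : ∀ σ : ℝ, σ = 1 ∨ σ = -1 → σ * u q.1 q.2 t ≤ B₀ + M t := by
      intro σ hσ
      by_contra hlt
      push_neg at hlt
      set d : ℝ := σ * u q.1 q.2 t - (B₀ + M t) with hd
      have hdpos : 0 < d := by rw [hd]; linarith
      have hεpos : 0 < d / (2 * t) := div_pos hdpos (by linarith)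
      have hk := key σ hσ (d / (2 * t)) hεpos q hq
      have : d / (2 * t) * t = d / 2 := by
        field_simp
      rw [this] at hk
      linarith
    have h1 := hside 1 (Or.inl rfl)
    have h2 := hside (-1) (Or.inr rfl)
    rw [abs_le]
    constructor <;> linarith
  -- `Mα` is nonnegative
  have hθsS : θs ≤ θS := by
    have hmem : ((R/2 : ℝ), (0:ℝ)) ∈ cylStrip R a := by
      refine ⟨⟨?_, ?_⟩, ⟨?_, ?_⟩⟩ <;> simp <;> linarith
    have := hθ (R/2) 0 t hmem ⟨ht0, htT⟩
    linarith [this.1, this.2]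
  have hMα0 : 0 ≤ Mα := le_trans (abs_nonneg _) (hα θs ⟨le_rfl, hθsS⟩)
  -- comparison of `h` with the essential sup norm of `f₀`
  have hcomp : ∀ s ∈ Ioo (0:ℝ) t,
      h s ≤ Mα * (nLp R a ⊤ (fun r z s' => r * fφ r z s') s).toReal := by
    intro s hs
    have hsT' : s ∈ Ioo (0:ℝ) T := ⟨hs.1, hs.2.trans htT⟩
    set c : ℝ := Mα * (nLp R a ⊤ (fun r z s' => r * fφ r z s') s).toReal with hc
    have hSRCs : Continuous fun q : ℝ × ℝ => SRC (q.1, q.2, s) :=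
      hSRCcont.comp (continuous_fst.prodMk (continuous_snd.prodMk continuous_const))
    have hptwise : ∀ q₀ ∈ cylStrip R a, |SRC (q₀.1, q₀.2, s)| ≤ c := by
      intro q₀ hq₀
      have hB := ofReal_abs_le_eLpNormTop (g := fun q : ℝ × ℝ => SRC (q.1, q.2, s))
        hSRCs hq₀
      have hmono : eLpNorm (fun q : ℝ × ℝ => SRC (q.1, q.2, s)) ⊤ (cylMeas R a)
          ≤ eLpNorm (fun q : ℝ × ℝ =>
              Mα * (q.1 * fφ q.1 q.2 s)) ⊤ (cylMeas R a) := by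
        apply eLpNorm_mono_ae
        filter_upwards [cylMeas_ae_mem R a] with q' hq'
        rw [hSRCeq q'.1 q'.2 s hq'.1.1 hq'.1.2 hq'.2.1 hq'.2.2 hsT'.1 hsT'.2]
        calc ‖α (θ q'.1 q'.2 s) * (q'.1 * fφ q'.1 q'.2 s)‖
            = |α (θ q'.1 q'.2 s)| * |q'.1 * fφ q'.1 q'.2 s| := by
              rw [Real.norm_eq_abs, abs_mul]
          _ ≤ Mα * |q'.1 * fφ q'.1 q'.2 s| :=
              mul_le_mul_of_nonneg_right (hα _ (hθ q'.1 q'.2 s hq' hsT')) (abs_nonneg _)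
          _ = ‖Mα * (q'.1 * fφ q'.1 q'.2 s)‖ := by
              rw [Real.norm_eq_abs, abs_mul Mα, abs_of_nonneg hMα0]
      have hsmul : eLpNorm (fun q : ℝ × ℝ => Mα * (q.1 * fφ q.1 q.2 s)) ⊤ (cylMeas R a)
          = ENNReal.ofReal Mα
            * nLp R a ⊤ (fun r z s' => r * fφ r z s') s := by
        have heq : (fun q : ℝ × ℝ => Mα * (q.1 * fφ q.1 q.2 s))
            = Mα • sp (fun r z s' => r * fφ r z s') s := by
          funext q'
          simp [sp, smul_eq_mul]
        rw [heq, eLpNorm_const_smul, nLp]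
        rw [enorm_eq_ofReal hMα0]
      have hchain := hB.trans (hmono.trans_eq hsmul)
      have hfin : ENNReal.ofReal Mα
          * nLp R a ⊤ (fun r z s' => r * fφ r z s') s ≠ ⊤ :=
        ENNReal.mul_ne_top ENNReal.ofReal_ne_top (hf0fin s hsT')
      calc |SRC (q₀.1, q₀.2, s)|
          = (ENNReal.ofReal |SRC (q₀.1, q₀.2, s)|).toReal :=
            (ENNReal.toReal_ofReal (abs_nonneg _)).symm
        _ ≤ (ENNReal.ofReal Mα
            * nLp R a ⊤ (fun r z s' => r * fφ r z s') s).toReal :=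
            ENNReal.toReal_mono hfin hchain
        _ = c := by rw [ENNReal.toReal_mul, ENNReal.toReal_ofReal hMα0]
    apply csSup_le (hKne.image _)
    rintro y ⟨q', hq'K, rfl⟩
    have hclosedE : IsClosed {q : ℝ × ℝ | |SRC (q.1, q.2, s)| ≤ c} :=
      isClosed_le (continuous_abs.comp hSRCs) continuous_const
    have hsub2 : closure (cylStrip R a) ⊆ {q : ℝ × ℝ | |SRC (q.1, q.2, s)| ≤ c} :=
      hclosedE.closure_subset_iff.2 hptwise
    rw [hclosure] at hsub2
    exact hsub2 hq'K
  -- comparison of `B₀` with the essential sup norm of `u(0)`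
  have hB0le : B₀ ≤ (nLp R a ⊤ u 0).toReal := by
    apply csSup_le (hKne.image _)
    rintro y ⟨q', hq'K, rfl⟩
    have hus0 : Continuous fun q : ℝ × ℝ => u q.1 q.2 0 :=
      hucont.comp (continuous_fst.prodMk (continuous_snd.prodMk continuous_const))
    have hptwise : ∀ q₀ ∈ cylStrip R a, |u q₀.1 q₀.2 0| ≤ (nLp R a ⊤ u 0).toReal := by
      intro q₀ hq₀
      have hB := ofReal_abs_le_eLpNormTop (g := fun q : ℝ × ℝ => u q.1 q.2 0) hus0 hq₀
      calc |u q₀.1 q₀.2 0| = (ENNReal.ofReal |u q₀.1 q₀.2 0|).toReal :=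
            (ENNReal.toReal_ofReal (abs_nonneg _)).symm
        _ ≤ (nLp R a ⊤ u 0).toReal := ENNReal.toReal_mono hu0 hB
    have hclosedE : IsClosed {q : ℝ × ℝ | |u q.1 q.2 0| ≤ (nLp R a ⊤ u 0).toReal} :=
      isClosed_le (continuous_abs.comp hus0) continuous_const
    have hsub2 := hclosedE.closure_subset_iff.2 hptwise
    rw [hclosure] at hsub2
    exact hsub2 hq'K
  -- comparison of `M t` with the time integral of the norm of `f₀`
  have hMt : M t ≤ Mα * ∫ s in Ioo 0 t,
      (nLp R a ⊤ (fun r z s' => r * fφ r z s') s).toReal := by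
    have h1 : M t = ∫ s in Ioo 0 t, h s := by
      show (∫ x in (0:ℝ)..t, h x) = _
      rw [intervalIntegral.integral_of_le ht0.le, integral_Ioc_eq_integral_Ioo]
    have hint1 : IntegrableOn h (Ioo 0 t) :=
      ((hhcont.continuousOn).integrableOn_compact isCompact_Icc).mono_set
        Ioo_subset_Icc_self
    have hint2 : IntegrableOn
        (fun s => Mα * (nLp R a ⊤ (fun r z s' => r * fφ r z s') s).toReal) (Ioo 0 t) :=
      (hf0.mono_set (Ioo_subset_Ioo le_rfl htT.le)).const_mul Mα
    rw [h1, ← MeasureTheory.integral_const_mul]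
    exact setIntegral_mono_on hint1 hint2 measurableSet_Ioo hcomp
  -- conclusion
  calc nLp R a ⊤ u t = eLpNorm (sp u t) ⊤ (cylMeas R a) := rfl
    _ ≤ ENNReal.ofReal (B₀ + M t) := eLpNormTop_le_of_bound fun q hq => hbound q hq
    _ ≤ ENNReal.ofReal
        (Mα * (∫ t' in Ioo 0 t, (nLp R a ⊤ (fun r z s => r * fφ r z s) t').toReal)
          + (nLp R a ⊤ u 0).toReal) := by
      apply ENNReal.ofReal_le_ofReal
      linarith
end
end

section
/- Let v be an axially symmetric smooth divergence-free vector field on Ω̄ with v_r = 0 on S₁ and v_z = 0 on S₂, and let ψ be the axially symmetric smooth solution of −Δψ + ψ/r² = ω_φ in Ω with ψ = 0 on S, where ω_φ = v_{r,z} − v_{z,r}. Then there is a constant c > 0 depending only on Ω such that: (i) |∇ψ|²_{2,Ω} + |ψ/r|²_{2,Ω} ≤ c(|v_r|²_{2,Ω} + |v_z|²_{2,Ω}); and (ii) if moreover ω_φ = 0 on S, then for every t, ∫₀^t(|∇ψ_{,z}|²_{2,Ω} + |(ψ/r)_{,z}|²_{2,Ω} + |ψ_{,z}|²_{2,Ω})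 dt' ≤ c∫₀^t |ω_φ|²_{2,Ω} dt'. -/
open MeasureTheory Real Set
open scoped ENNReal

noncomputable section

-- ## Auxiliary lemmas
def p1 (F : ℝ × ℝ → ℝ) : ℝ × ℝ → ℝ := fun q => deriv (fun s => F (s, q.2)) q.1
def p2 (F : ℝ × ℝ → ℝ) : ℝ × ℝ → ℝ := fun q => deriv (fun s => F (q.1, s)) q.2

def Sm2 (F : ℝ × ℝ → ℝ) : Prop := ∀ n : ℕ, ContDiff ℝ n F

lemma Sm2.cont {F} (h : Sm2 F) : Continuous F := (h 0).continuous

lemma Sm2.hd1 {F} (h : Sm2 F) (r z : ℝ) :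
    HasDerivAt (fun s => F (s, z)) (p1 F (r, z)) r := by
  have hc : HasDerivAt (fun s : ℝ => (s, z)) ((1 : ℝ), (0 : ℝ)) r :=
    (hasDerivAt_id r).prodMk (hasDerivAt_const r z)
  have hF : HasFDerivAt F (fderiv ℝ F (r, z)) (r, z) :=
    (((h 1).differentiable (by simp)) (r, z)).hasFDerivAt
  have := (hF.comp_hasDerivAt r hc).differentiableAt
  simp only [Function.comp_def] at this
  exact this.hasDerivAt

lemma Sm2.hd2 {F} (h : Sm2 F) (r z : ℝ) :
    HasDerivAt (fun s => F (r, s)) (p2 F (r, z)) z := by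
  have hc : HasDerivAt (fun s : ℝ => (r, s)) ((0 : ℝ), (1 : ℝ)) z :=
    (hasDerivAt_const z r).prodMk (hasDerivAt_id z)
  have hF : HasFDerivAt F (fderiv ℝ F (r, z)) (r, z) :=
    (((h 1).differentiable (by simp)) (r, z)).hasFDerivAt
  have := (hF.comp_hasDerivAt z hc).differentiableAt
  simp only [Function.comp_def] at this
  exact this.hasDerivAt

lemma p1_eq {F} (h : Sm2 F) : p1 F = fun q => fderiv ℝ F q (1, 0) := by
  funext q
  have hc : HasDerivAt (fun s : ℝ => (s, q.2)) ((1 : ℝ), (0 : ℝ)) q.1 :=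
    (hasDerivAt_id q.1).prodMk (hasDerivAt_const q.1 q.2)
  have hF : HasFDerivAt F (fderiv ℝ F q) q :=
    (((h 1).differentiable (by simp)) q).hasFDerivAt
  have := (hF.comp_hasDerivAt q.1 hc).deriv
  simpa [p1, Function.comp_def] using this

lemma p2_eq {F} (h : Sm2 F) : p2 F = fun q => fderiv ℝ F q (0, 1) := by
  funext q
  have hc : HasDerivAt (fun s : ℝ => (q.1, s)) ((0 : ℝ), (1 : ℝ)) q.2 :=
    (hasDerivAt_const q.2 q.1).prodMk (hasDerivAt_id q.2)
  have hF : HasFDerivAt F (fderiv ℝ F q) q :=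
    (((h 1).differentiable (by simp)) q).hasFDerivAt
  have := (hF.comp_hasDerivAt q.2 hc).deriv
  simpa [p2, Function.comp_def] using this

lemma Sm2.fderiv_apply {F} (h : Sm2 F) (v : ℝ × ℝ) : Sm2 (fun q => fderiv ℝ F q v) := by
  intro n
  have h1 : ContDiff ℝ n (fderiv ℝ F) := by
    have := (h (n + 1)).fderiv_right (m := n) (by exact_mod_cast le_rfl)
    exact this
  exact h1.clm_apply contDiff_const

lemma Sm2.smooth_p1 {F} (h : Sm2 F) : Sm2 (p1 F) := by
  rw [p1_eq h]; exact h.fderiv_apply _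

lemma Sm2.smooth_p2 {F} (h : Sm2 F) : Sm2 (p2 F) := by
  rw [p2_eq h]; exact h.fderiv_apply _

lemma deriv_clm_apply_aux {F} (h : Sm2 F) (v : ℝ × ℝ) (q w : ℝ × ℝ) :
    HasFDerivAt (fun p => fderiv ℝ F p v)
      ((fderiv ℝ (fderiv ℝ F) q).flip v) q := by
  have h2 : ContDiff ℝ 1 (fderiv ℝ F) := by
    have := (h 2).fderiv_right (m := 1) (by exact_mod_cast le_rfl)
    exact this
  have hg : HasFDerivAt (fderiv ℝ F) (fderiv ℝ (fderiv ℝ F) q) q :=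
    ((h2.differentiable (by simp)) q).hasFDerivAt
  have := hg.clm_apply (hasFDerivAt_const v q)
  simpa using this

lemma Sm2.swap {F} (h : Sm2 F) (q : ℝ × ℝ) : p1 (p2 F) q = p2 (p1 F) q := by
  have hsym : ∀ v w : ℝ × ℝ, fderiv ℝ (fderiv ℝ F) q v w = fderiv ℝ (fderiv ℝ F) q w v := by
    intro v w
    refine second_derivative_symmetric (f := F) (f' := fderiv ℝ F) (x := q) (fun y => ?_) ?_ v w
    · exact (((h 1).differentiable (by simp)) y).hasFDerivAt
    · have h2 : ContDiff ℝ 1 (fderiv ℝ F) := by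
        have := (h 2).fderiv_right (m := 1) (by exact_mod_cast le_rfl)
        exact this
      exact ((h2.differentiable (by simp)) q).hasFDerivAt
  have e1 : p1 (p2 F) q = fderiv ℝ (fderiv ℝ F) q (1, 0) (0, 1) := by
    rw [p2_eq h]
    have hc : HasDerivAt (fun s : ℝ => (s, q.2)) ((1 : ℝ), (0 : ℝ)) q.1 :=
      (hasDerivAt_id q.1).prodMk (hasDerivAt_const q.1 q.2)
    have := ((deriv_clm_apply_aux h (0,1) q q).comp_hasDerivAt q.1 hc).deriv
    simp only [Function.comp_def] at this
    simpa [p1, Function.comp_def] using this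
  have e2 : p2 (p1 F) q = fderiv ℝ (fderiv ℝ F) q (0, 1) (1, 0) := by
    rw [p1_eq h]
    have hc : HasDerivAt (fun s : ℝ => (q.1, s)) ((0 : ℝ), (1 : ℝ)) q.2 :=
      (hasDerivAt_const q.2 q.1).prodMk (hasDerivAt_id q.2)
    have := ((deriv_clm_apply_aux h (1,0) q q).comp_hasDerivAt q.2 hc).deriv
    simp only [Function.comp_def] at this
    simpa [p2, Function.comp_def] using this
  rw [e1, e2, hsym]






def Sm (w : ℝ → ℝ → ℝ → ℝ) : Prop :=
  ∀ n : ℕ, ContDiff ℝ n (fun q : ℝ × ℝ × ℝ => w q.1 q.2.1 q.2.2)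

def unc3 (w : ℝ → ℝ → ℝ → ℝ) : ℝ × ℝ × ℝ → ℝ := fun q => w q.1 q.2.1 q.2.2

lemma Sm.cont {w} (h : Sm w) : Continuous (unc3 w) := (h 0).continuous

lemma unc3_pdr {w} (h : Sm w) : unc3 (pdr w) = fun q => fderiv ℝ (unc3 w) q (1, 0, 0) := by
  funext q
  have hc : HasDerivAt (fun s : ℝ => (s, q.2.1, q.2.2)) ((1:ℝ), (0:ℝ), (0:ℝ)) q.1 :=
    (hasDerivAt_id q.1).prodMk ((hasDerivAt_const q.1 q.2.1).prodMk (hasDerivAt_const q.1 q.2.2))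
  have hF : HasFDerivAt (unc3 w) (fderiv ℝ (unc3 w) q) q :=
    (((h 1).differentiable (by simp)) q).hasFDerivAt
  have := (hF.comp_hasDerivAt q.1 hc).deriv
  simp only [Function.comp_def] at this
  simpa [unc3, pdr] using this

lemma unc3_pdz {w} (h : Sm w) : unc3 (pdz w) = fun q => fderiv ℝ (unc3 w) q (0, 1, 0) := by
  funext q
  have hc : HasDerivAt (fun s : ℝ => (q.1, s, q.2.2)) ((0:ℝ), (1:ℝ), (0:ℝ)) q.2.1 :=
    (hasDerivAt_const q.2.1 q.1).prodMk ((hasDerivAt_id q.2.1).prodMk (hasDerivAt_const q.2.1 q.2.2))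
  have hF : HasFDerivAt (unc3 w) (fderiv ℝ (unc3 w) q) q :=
    (((h 1).differentiable (by simp)) q).hasFDerivAt
  have := (hF.comp_hasDerivAt q.2.1 hc).deriv
  simp only [Function.comp_def] at this
  simpa [unc3, pdz] using this

lemma Sm.fderiv_apply {w : ℝ → ℝ → ℝ → ℝ} (h : Sm w) (v : ℝ × ℝ × ℝ) (n : ℕ) :
    ContDiff ℝ n (fun q => fderiv ℝ (unc3 w) q v) := by
  have h1 : ContDiff ℝ n (fderiv ℝ (unc3 w)) := by
    have := (h (n + 1)).fderiv_right (m := n) (by exact_mod_cast le_rfl)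
    exact this
  exact h1.clm_apply contDiff_const

lemma Sm.pdr {w} (h : Sm w) : Sm (_root_.pdr w) := by
  intro n
  have e : unc3 (_root_.pdr w) = fun q => fderiv ℝ (unc3 w) q (1, 0, 0) := unc3_pdr h
  have := h.fderiv_apply (1,0,0) n
  rw [← e] at this
  exact this

lemma Sm.pdz {w} (h : Sm w) : Sm (_root_.pdz w) := by
  intro n
  have e : unc3 (_root_.pdz w) = fun q => fderiv ℝ (unc3 w) q (0, 1, 0) := unc3_pdz h
  have := h.fderiv_apply (0,1,0) n
  rw [← e] at this
  exact this



variable {R a : ℝ}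

lemma strip_subset : cylStrip R a ⊆ Icc 0 R ×ˢ Icc (-a) a :=
  Set.prod_mono Ioo_subset_Icc_self Ioo_subset_Icc_self

lemma strip_measurable : MeasurableSet (cylStrip R a) :=
  measurableSet_Ioo.prod measurableSet_Ioo

lemma strip_finite : volume (cylStrip R a) < ⊤ :=
  lt_of_le_of_lt (measure_mono strip_subset) (isCompact_Icc.prod isCompact_Icc).measure_lt_top

lemma integrableOn_strip_of_cont {f : ℝ × ℝ → ℝ} (hf : Continuous f) :
    IntegrableOn f (cylStrip R a) :=
  (hf.continuousOn.integrableOn_compact (isCompact_Icc.prod isCompact_Icc)).mono_set strip_subset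

lemma integrableOn_strip_of_bdd {f : ℝ × ℝ → ℝ}
    (hm : AEStronglyMeasurable f (volume.restrict (cylStrip R a))) {C : ℝ}
    (hb : ∀ q ∈ cylStrip R a, |f q| ≤ C) : IntegrableOn f (cylStrip R a) := by
  refine ⟨hm, HasFiniteIntegral.restrict_of_bounded (C := C) strip_finite ?_⟩
  filter_upwards [ae_restrict_mem strip_measurable] with q hq
  exact hb q hq

lemma integral_cylMeas (f : ℝ × ℝ → ℝ) :
    ∫ q, f q ∂(cylMeas R a) = ∫ q in cylStrip R a, (2 * π * q.1) * f q := by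
  have hmeas : Measurable fun q : ℝ × ℝ => (2 * π * q.1).toNNReal :=
    (measurable_const.mul measurable_fst).real_toNNReal
  have : cylMeas R a = ((volume : Measure (ℝ × ℝ)).restrict (cylStrip R a)).withDensity
      (fun q => ((2 * π * q.1).toNNReal : ℝ≥0∞)) := rfl
  rw [this, integral_withDensity_eq_integral_smul hmeas]
  refine setIntegral_congr_fun strip_measurable fun q hq => ?_
  have hq1 : 0 < q.1 := hq.1.1
  have : ((2 * π * q.1).toNNReal : ℝ) = 2 * π * q.1 :=
    Real.coe_toNNReal _ (by positivity)
  simp [NNReal.smul_def, this]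

lemma integral_cylMeas' {R a : ℝ} (f : ℝ × ℝ → ℝ) :
    ∫ q, f q ∂(cylMeas R a) = (2 * π) * ∫ q in cylStrip R a, q.1 * f q := by
  rw [integral_cylMeas]
  simp_rw [mul_assoc]
  rw [integral_const_mul, integral_const_mul]

lemma restrict_strip_prod : (volume : Measure (ℝ × ℝ)).restrict (cylStrip R a)
    = ((volume : Measure ℝ).restrict (Ioo 0 R)).prod ((volume : Measure ℝ).restrict (Ioo (-a) a)) := by
  rw [cylStrip, Measure.prod_restrict, ← Measure.volume_eq_prod ℝ ℝ]


lemma int_p1_zero {R a : ℝ} (hR : 0 < R) (g : ℝ × ℝ → ℝ) (hg : Sm2 g)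
    (h0 : ∀ z ∈ Ioo (-a) a, g (0, z) = 0 ∧ g (R, z) = 0) :
    ∫ q in cylStrip R a, p1 g q = 0 := by
  rw [restrict_strip_prod,
    integral_prod_symm _ (by rw [← restrict_strip_prod]
                             exact integrableOn_strip_of_cont hg.smooth_p1.cont)]
  calc ∫ z in Ioo (-a) a, ∫ r in Ioo 0 R, p1 g (r, z)
      = ∫ z in Ioo (-a) a, (0:ℝ) := by
        refine setIntegral_congr_fun measurableSet_Ioo fun z hz => ?_
        have : ∫ r in Ioo 0 R, p1 g (r, z) = g (R, z) - g (0, z) := by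
          rw [← integral_Ioc_eq_integral_Ioo, ← intervalIntegral.integral_of_le hR.le]
          exact intervalIntegral.integral_eq_sub_of_hasDerivAt (fun x _ => hg.hd1 x z)
            ((hg.smooth_p1.cont.comp (continuous_id.prodMk continuous_const)).intervalIntegrable 0 R)
        rw [this, (h0 z hz).1, (h0 z hz).2, sub_zero]
    _ = 0 := by simp

lemma int_p2_zero {R a : ℝ} (ha : 0 < a) (h D : ℝ × ℝ → ℝ)
    (hint : IntegrableOn D (cylStrip R a))
    (hd : ∀ r ∈ Ioo (0:ℝ) R, ∀ z : ℝ, HasDerivAt (fun s => h (r, s)) (D (r, z)) z)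
    (hcont : ∀ r ∈ Ioo (0:ℝ) R, Continuous fun z => D (r, z))
    (hb : ∀ r ∈ Ioo (0:ℝ) R, h (r, a) = h (r, -a)) :
    ∫ q in cylStrip R a, D q = 0 := by
  rw [restrict_strip_prod, integral_prod _ (by rw [← restrict_strip_prod]; exact hint)]
  calc ∫ r in Ioo (0:ℝ) R, ∫ z in Ioo (-a) a, D (r, z)
      = ∫ r in Ioo (0:ℝ) R, (0:ℝ) := by
        refine setIntegral_congr_fun measurableSet_Ioo fun r hr => ?_
        have : ∫ z in Ioo (-a) a, D (r, z) = h (r, a) - h (r, -a) := by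
          rw [← integral_Ioc_eq_integral_Ioo,
            ← intervalIntegral.integral_of_le (by linarith : -a ≤ a)]
          exact intervalIntegral.integral_eq_sub_of_hasDerivAt (fun z _ => hd r hr z)
            ((hcont r hr).intervalIntegrable _ _)
        rw [this, hb r hr, sub_self]
    _ = 0 := by simp

lemma bound_linear {R a : ℝ} (hR : 0 < R) {F : ℝ × ℝ → ℝ} (hF : Sm2 F)
    (h0 : ∀ z, F (0, z) = 0) :
    ∃ M : ℝ, 0 ≤ M ∧ ∀ q ∈ cylStrip R a, |F q| ≤ M * q.1 := by
  obtain ⟨C, hC⟩ := (isCompact_Icc.prod isCompact_Icc :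
      IsCompact (Icc (0:ℝ) R ×ˢ Icc (-a) a)).exists_bound_of_continuousOn
      hF.smooth_p1.cont.continuousOn
  refine ⟨max C 0, le_max_right _ _, ?_⟩
  rintro ⟨r, z⟩ hq
  have hz : z ∈ Icc (-a) a := Ioo_subset_Icc_self hq.2
  have key := Convex.norm_image_sub_le_of_norm_hasDerivWithin_le
    (f := fun s => F (s, z)) (f' := fun s => p1 F (s, z)) (C := max C 0) (s := Icc (0:ℝ) R)
    (fun x _ => (hF.hd1 x z).hasDerivWithinAt)
    (fun x hx => le_trans (hC (x, z) ⟨hx, hz⟩) (le_max_left _ _))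
    (convex_Icc _ _) (⟨le_rfl, hR.le⟩ : (0:ℝ) ∈ Icc (0:ℝ) R) (Ioo_subset_Icc_self hq.1)
  simp only [Real.norm_eq_abs, h0 z, sub_zero] at key
  simpa [abs_of_pos hq.1.1] using key

lemma deriv_zero_of_locally_zero {f : ℝ → ℝ} {r : ℝ} {s : Set ℝ} (hs : s ∈ nhds r)
    (h : ∀ x ∈ s, f x = 0) : deriv f r = 0 := by
  have he : f =ᶠ[nhds r] fun _ => (0:ℝ) := Filter.eventually_of_mem hs h
  rw [Filter.EventuallyEq.deriv_eq he, deriv_const]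

lemma cont_param {R a : ℝ} {G : ℝ × ℝ → ℝ → ℝ}
    (hG : Continuous fun p : (ℝ × ℝ) × ℝ => G p.1 p.2) :
    Continuous fun t => ∫ q in cylStrip R a, G q t := by
  rw [continuous_iff_continuousAt]
  intro t0
  obtain ⟨C, hC⟩ := ((isCompact_Icc.prod isCompact_Icc : IsCompact (Icc (0:ℝ) R ×ˢ Icc (-a) a)).prod
      (isCompact_Icc : IsCompact (Icc (t0-1) (t0+1)))).exists_bound_of_continuousOn
      hG.continuousOn
  refine continuousAt_of_dominated (F := fun t q => G q t) (bound := fun _ => C)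
    (Filter.Eventually.of_forall fun t =>
      (hG.comp (continuous_id.prodMk continuous_const)).aestronglyMeasurable) ?_
    (integrableOn_const strip_finite.ne) ?_
  · have hev : ∀ᶠ t in nhds t0, t ∈ Icc (t0-1) (t0+1) :=
      Filter.eventually_of_mem (Ioo_mem_nhds (by linarith) (by linarith))
        fun x hx => Ioo_subset_Icc_self hx
    filter_upwards [hev] with t ht
    filter_upwards [ae_restrict_mem strip_measurable] with q hq
    exact hC (q, t) ⟨strip_subset hq, ht⟩
  · exact Filter.Eventually.of_forall fun q =>
      (hG.comp (continuous_const.prodMk continuous_id)).continuousAt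

lemma Sm.slice {w} (h : Sm w) (t : ℝ) : Sm2 (sp w t) := by
  intro n
  have hemb : ContDiff ℝ n fun q : ℝ × ℝ => ((q.1, q.2, t) : ℝ × ℝ × ℝ) :=
    contDiff_fst.prodMk (contDiff_snd.prodMk contDiff_const)
  exact (h n).comp hemb

lemma sp_pdr (w : ℝ → ℝ → ℝ → ℝ) (t : ℝ) : sp (pdr w) t = p1 (sp w t) := rfl
lemma sp_pdz (w : ℝ → ℝ → ℝ → ℝ) (t : ℝ) : sp (pdz w) t = p2 (sp w t) := rfl



lemma aux_key {R a : ℝ} (hR : 0 < R) (ha : 0 < a)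
    (Ψ Vr Vz : ℝ × ℝ → ℝ) (hΨ : Sm2 Ψ) (hVr : Sm2 Vr) (hVz : Sm2 Vz)
    (hax : ∀ z : ℝ, Ψ (0, z) = 0)
    (hPDE : ∀ q ∈ cylStrip R a,
      -(p1 (p1 Ψ) q + p1 Ψ q / q.1 + p2 (p2 Ψ) q) + Ψ q / q.1 ^ 2 = p2 Vr q - p1 Vz q)
    (hbR : ∀ z ∈ Icc (-a) a, Ψ (R, z) = 0)
    (hbA : ∀ r ∈ Icc (0:ℝ) R, Ψ (r, a) = 0 ∧ Ψ (r, -a) = 0) :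
    (∫ q in cylStrip R a, q.1 * ((p1 Ψ q) ^ 2 + (p2 Ψ q) ^ 2))
      + (∫ q in cylStrip R a, q.1 * (Ψ q / q.1) ^ 2)
    ≤ 2 * ((∫ q in cylStrip R a, q.1 * (Vr q) ^ 2)
           + (∫ q in cylStrip R a, q.1 * (Vz q) ^ 2)) := by
  set s := cylStrip R a with hs
  -- the two divergence fields
  set G : ℝ × ℝ → ℝ := fun q => q.1 * (p1 Ψ q - Vz q) * Ψ q with hGdef
  set H : ℝ × ℝ → ℝ := fun q => q.1 * (p2 Ψ q + Vr q) * Ψ q with hHdef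
  have hG : Sm2 G := fun n =>
    (contDiff_fst.mul ((hΨ.smooth_p1 n).sub (hVz n))).mul (hΨ n)
  have hH : Sm2 H := fun n =>
    (contDiff_fst.mul ((hΨ.smooth_p2 n).add (hVr n))).mul (hΨ n)
  -- vanishing of the divergence integrals
  have hzero1 : ∫ q in s, p1 G q = 0 := by
    refine int_p1_zero hR G hG fun z hz => ⟨?_, ?_⟩
    · simp [hGdef]
    · simp [hGdef, hbR z (Ioo_subset_Icc_self hz)]
  have hzero2 : ∫ q in s, p2 H q = 0 := by
    refine int_p2_zero ha H (p2 H) (integrableOn_strip_of_cont hH.smooth_p2.cont)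
      (fun r _ z => hH.hd2 r z) (fun r _ => hH.smooth_p2.cont.comp
        (continuous_const.prodMk continuous_id)) ?_
    intro r hr
    have h1 := (hbA r (Ioo_subset_Icc_self hr)).1
    have h2 := (hbA r (Ioo_subset_Icc_self hr)).2
    simp [hHdef, h1, h2]
  -- pointwise derivative formulas
  have hpG : ∀ q : ℝ × ℝ, p1 G q =
      (1 * (p1 Ψ q - Vz q) + q.1 * (p1 (p1 Ψ) q - p1 Vz q)) * Ψ q
        + q.1 * (p1 Ψ q - Vz q) * p1 Ψ q := by
    intro q
    have h := (((hasDerivAt_id q.1).mul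
      ((hΨ.smooth_p1.hd1 q.1 q.2).sub (hVz.hd1 q.1 q.2))).mul (hΨ.hd1 q.1 q.2)).deriv
    simpa [hGdef, p1, Pi.mul_def, Pi.sub_def] using h
  have hpH : ∀ q : ℝ × ℝ, p2 H q =
      (0 * (p2 Ψ q + Vr q) + q.1 * (p2 (p2 Ψ) q + p2 Vr q)) * Ψ q
        + q.1 * (p2 Ψ q + Vr q) * p2 Ψ q := by
    intro q
    have h := (((hasDerivAt_const q.2 q.1).mul
      ((hΨ.smooth_p2.hd2 q.1 q.2).add (hVr.hd2 q.1 q.2))).mul (hΨ.hd2 q.1 q.2)).deriv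
    simpa [hHdef, p2, Pi.mul_def, Pi.add_def] using h
  -- the pointwise identity on the strip
  have key : ∀ q ∈ s, q.1 * ((p1 Ψ q) ^ 2 + (p2 Ψ q) ^ 2) + (Ψ q) ^ 2 / q.1
      - (-(q.1 * Vr q * p2 Ψ q) + q.1 * Vz q * p1 Ψ q + Vz q * Ψ q)
      = p1 G q + p2 H q := by
    intro q hq
    have hr0 : (0:ℝ) < q.1 := hq.1.1
    have hP := hPDE q hq
    have hP' : Ψ q = q.1 ^ 2 * (p2 Vr q - p1 Vz q) + q.1 ^ 2 * p1 (p1 Ψ) q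
        + q.1 * p1 Ψ q + q.1 ^ 2 * p2 (p2 Ψ) q := by
      have h2 : q.1 ≠ 0 := hr0.ne'
      field_simp at hP
      apply mul_left_cancel₀ h2
      linear_combination q.1 * hP
    rw [hpG q, hpH q]
    field_simp
    linear_combination Ψ q * hP'
  -- integrability
  have i1 : IntegrableOn (fun q : ℝ × ℝ => q.1 * ((p1 Ψ q) ^ 2 + (p2 Ψ q) ^ 2)) s :=
    integrableOn_strip_of_cont (continuous_fst.mul
      ((hΨ.smooth_p1.cont.pow 2).add (hΨ.smooth_p2.cont.pow 2)))
  have i2 : IntegrableOn (fun q : ℝ × ℝ => (Ψ q) ^ 2 / q.1) s := by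
    obtain ⟨M, hM0, hM⟩ := bound_linear (a := a) hR hΨ hax
    refine integrableOn_strip_of_bdd
      (((hΨ.cont.pow 2).measurable.div measurable_fst).aestronglyMeasurable)
      (C := M ^ 2 * R) fun q hq => ?_
    have hr0 : (0:ℝ) < q.1 := hq.1.1
    have hb := hM q hq
    rw [abs_div, abs_of_pos hr0, div_le_iff₀ hr0, abs_pow]
    have h1 : |Ψ q| ^ 2 ≤ (M * q.1) ^ 2 := by
      have := abs_nonneg (Ψ q); nlinarith
    have hqR : q.1 ≤ R := hq.1.2.le
    nlinarith [sq_nonneg q.1, mul_pos hr0 hr0, hM0]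
  have i3 : IntegrableOn (fun q : ℝ × ℝ =>
      -(q.1 * Vr q * p2 Ψ q) + q.1 * Vz q * p1 Ψ q + Vz q * Ψ q) s :=
    integrableOn_strip_of_cont (((continuous_fst.mul hVr.cont).mul hΨ.smooth_p2.cont).neg.add
      ((continuous_fst.mul hVz.cont).mul hΨ.smooth_p1.cont) |>.add (hVz.cont.mul hΨ.cont))
  have iG : IntegrableOn (p1 G) s := integrableOn_strip_of_cont hG.smooth_p1.cont
  have iH : IntegrableOn (p2 H) s := integrableOn_strip_of_cont hH.smooth_p2.cont
  -- the integral identity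
  have hident : (∫ q in s, q.1 * ((p1 Ψ q) ^ 2 + (p2 Ψ q) ^ 2)) + (∫ q in s, (Ψ q) ^ 2 / q.1)
      = ∫ q in s, -(q.1 * Vr q * p2 Ψ q) + q.1 * Vz q * p1 Ψ q + Vz q * Ψ q := by
    have e1 : ∫ q in s, (q.1 * ((p1 Ψ q) ^ 2 + (p2 Ψ q) ^ 2) + (Ψ q) ^ 2 / q.1
        - (-(q.1 * Vr q * p2 Ψ q) + q.1 * Vz q * p1 Ψ q + Vz q * Ψ q))
        = ∫ q in s, (p1 G q + p2 H q) :=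
      setIntegral_congr_fun strip_measurable fun q hq => key q hq
    have i12 : IntegrableOn (fun q : ℝ × ℝ =>
        q.1 * ((p1 Ψ q) ^ 2 + (p2 Ψ q) ^ 2) + (Ψ q) ^ 2 / q.1) s := i1.add i2
    rw [integral_sub i12 i3, integral_add i1 i2, integral_add iG iH,
      hzero1, hzero2] at e1
    linarith
  -- the pointwise Cauchy-Schwarz bound
  have hmono : (∫ q in s, -(q.1 * Vr q * p2 Ψ q) + q.1 * Vz q * p1 Ψ q + Vz q * Ψ q)
      ≤ ∫ q in s, (q.1 * ((Vr q) ^ 2 + 2 * (Vz q) ^ 2)) / 2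
          + (q.1 * ((p1 Ψ q) ^ 2 + (p2 Ψ q) ^ 2) + (Ψ q) ^ 2 / q.1) / 2 := by
    refine setIntegral_mono_on i3 (((integrableOn_strip_of_cont (continuous_fst.mul
      ((hVr.cont.pow 2).add (continuous_const.mul (hVz.cont.pow 2))))).div_const 2).add
      ((i1.add i2).div_const 2)) strip_measurable fun q hq => ?_
    have hr0 : (0:ℝ) < q.1 := hq.1.1
    have h3 : 2 * (Vz q * Ψ q) - q.1 * (Vz q) ^ 2 ≤ (Ψ q) ^ 2 / q.1 := by
      rw [le_div_iff₀ hr0]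
      nlinarith [sq_nonneg (q.1 * Vz q - Ψ q)]
    nlinarith [mul_nonneg hr0.le (sq_nonneg (Vr q + p2 Ψ q)),
      mul_nonneg hr0.le (sq_nonneg (Vz q - p1 Ψ q)), h3]
  -- put everything together
  have e2 : (∫ q in s, (q.1 * ((Vr q) ^ 2 + 2 * (Vz q) ^ 2)) / 2
        + (q.1 * ((p1 Ψ q) ^ 2 + (p2 Ψ q) ^ 2) + (Ψ q) ^ 2 / q.1) / 2)
      = (∫ q in s, q.1 * ((Vr q) ^ 2 + 2 * (Vz q) ^ 2)) / 2
        + ((∫ q in s, q.1 * ((p1 Ψ q) ^ 2 + (p2 Ψ q) ^ 2)) + (∫ q in s, (Ψ q) ^ 2 / q.1)) / 2 := by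
    have j1 : IntegrableOn (fun q : ℝ × ℝ =>
        (q.1 * ((Vr q) ^ 2 + 2 * (Vz q) ^ 2)) / 2) s :=
      (integrableOn_strip_of_cont (continuous_fst.mul
        ((hVr.cont.pow 2).add (continuous_const.mul (hVz.cont.pow 2))))).div_const 2
    have j2 : IntegrableOn (fun q : ℝ × ℝ =>
        (q.1 * ((p1 Ψ q) ^ 2 + (p2 Ψ q) ^ 2) + (Ψ q) ^ 2 / q.1) / 2) s :=
      (i1.add i2).div_const 2
    rw [integral_add j1 j2, integral_div, integral_div, integral_add i1 i2]
  have e3 : (∫ q in s, q.1 * ((Vr q) ^ 2 + 2 * (Vz q) ^ 2))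
      = (∫ q in s, q.1 * (Vr q) ^ 2) + 2 * ∫ q in s, q.1 * (Vz q) ^ 2 := by
    have : ∀ q : ℝ × ℝ, q.1 * ((Vr q) ^ 2 + 2 * (Vz q) ^ 2)
        = q.1 * (Vr q) ^ 2 + 2 * (q.1 * (Vz q) ^ 2) := fun q => by ring
    simp_rw [this]
    rw [integral_add (f := fun q : ℝ × ℝ => q.1 * Vr q ^ 2) (g := fun q : ℝ × ℝ => 2 * (q.1 * Vz q ^ 2)) (integrableOn_strip_of_cont (continuous_fst.mul (hVr.cont.pow 2)))
      ((integrableOn_strip_of_cont (continuous_fst.mul (hVz.cont.pow 2))).const_mul 2),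
      integral_const_mul]
  have e4 : (∫ q in s, q.1 * (Ψ q / q.1) ^ 2) = ∫ q in s, (Ψ q) ^ 2 / q.1 := by
    refine setIntegral_congr_fun strip_measurable fun q hq => ?_
    have hr0 : (0:ℝ) < q.1 := hq.1.1
    field_simp
  have hVrnn : (0:ℝ) ≤ ∫ q in s, q.1 * (Vr q) ^ 2 :=
    setIntegral_nonneg strip_measurable fun q hq => mul_nonneg hq.1.1.le (sq_nonneg _)
  rw [e4]
  linarith [hident, hmono, e2.le, e3.le, e2.ge, e3.ge]


lemma integrableOn_sq_div {R a : ℝ} (hR : 0 < R) {F : ℝ × ℝ → ℝ} (hF : Sm2 F)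
    (h0 : ∀ z : ℝ, F (0, z) = 0) :
    IntegrableOn (fun q : ℝ × ℝ => (F q) ^ 2 / q.1) (cylStrip R a) := by
  obtain ⟨M, hM0, hM⟩ := bound_linear (a := a) hR hF h0
  refine integrableOn_strip_of_bdd
    (((hF.cont.pow 2).measurable.div measurable_fst).aestronglyMeasurable)
    (C := M ^ 2 * R) fun q hq => ?_
  have hr0 : (0:ℝ) < q.1 := hq.1.1
  have hb := hM q hq
  rw [abs_div, abs_of_pos hr0, div_le_iff₀ hr0, abs_pow]
  have h1 : |F q| ^ 2 ≤ (M * q.1) ^ 2 := by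
    have := abs_nonneg (F q); nlinarith
  have hqR : q.1 ≤ R := hq.1.2.le
  nlinarith [sq_nonneg q.1, mul_pos hr0 hr0, hM0]

lemma aux_key2 {R a : ℝ} (hR : 0 < R) (ha : 0 < a)
    (Ψ W : ℝ × ℝ → ℝ) (hΨ : Sm2 Ψ) (hW : Sm2 W)
    (hax : ∀ z : ℝ, Ψ (0, z) = 0)
    (hPDE : ∀ q ∈ cylStrip R a,
      -(p1 (p1 Ψ) q + p1 Ψ q / q.1 + p2 (p2 Ψ) q) + Ψ q / q.1 ^ 2 = W q)
    (hbR : ∀ z ∈ Icc (-a) a, Ψ (R, z) = 0)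
    (hbA : ∀ r ∈ Icc (0:ℝ) R, Ψ (r, a) = 0 ∧ Ψ (r, -a) = 0) :
    (∫ q in cylStrip R a, q.1 * ((p1 (p2 Ψ) q) ^ 2 + (p2 (p2 Ψ) q) ^ 2))
      + (∫ q in cylStrip R a, q.1 * (p2 Ψ q / q.1) ^ 2)
      + (∫ q in cylStrip R a, q.1 * (p2 Ψ q) ^ 2)
    ≤ (1 + R ^ 2) * ∫ q in cylStrip R a, q.1 * (W q) ^ 2 := by
  set s := cylStrip R a with hs
  have hax2 : ∀ z : ℝ, p2 Ψ (0, z) = 0 := fun z =>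
    deriv_zero_of_locally_zero Filter.univ_mem (fun x _ => hax x)
  set G2 : ℝ × ℝ → ℝ := fun q => -(q.1 * p1 Ψ q * p2 (p2 Ψ) q) with hG2def
  set H2 : ℝ × ℝ → ℝ :=
    fun q => q.1 * p1 Ψ q * p1 (p2 Ψ) q + Ψ q * p2 Ψ q / q.1 with hH2def
  set D2 : ℝ × ℝ → ℝ := fun q =>
    ((0 * p1 Ψ q + q.1 * p2 (p1 Ψ) q) * p1 (p2 Ψ) q
      + q.1 * p1 Ψ q * p2 (p1 (p2 Ψ)) q)
    + (p2 Ψ q * p2 Ψ q + Ψ q * p2 (p2 Ψ) q) / q.1 with hD2def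
  have hG2 : Sm2 G2 := fun n =>
    ((contDiff_fst.mul (hΨ.smooth_p1 n)).mul (hΨ.smooth_p2.smooth_p2 n)).neg
  -- boundary values of `p2 Ψ`, `p2 (p2 Ψ)` at r = R, and of `p1 Ψ` at z = ±a
  have hb1 : ∀ z' ∈ Ioo (-a) a, p2 Ψ (R, z') = 0 := fun z' hz' =>
    deriv_zero_of_locally_zero (Ioo_mem_nhds hz'.1 hz'.2)
      (fun x hx => hbR x (Ioo_subset_Icc_self hx))
  have hb2 : ∀ z ∈ Ioo (-a) a, p2 (p2 Ψ) (R, z) = 0 := fun z hz =>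
    deriv_zero_of_locally_zero (Ioo_mem_nhds hz.1 hz.2) (fun x hx => hb1 x hx)
  have hp1a : ∀ r ∈ Ioo (0:ℝ) R, p1 Ψ (r, a) = 0 ∧ p1 Ψ (r, -a) = 0 := fun r hr =>
    ⟨deriv_zero_of_locally_zero (Ioo_mem_nhds hr.1 hr.2)
        (fun x hx => (hbA x (Ioo_subset_Icc_self hx)).1),
      deriv_zero_of_locally_zero (Ioo_mem_nhds hr.1 hr.2)
        (fun x hx => (hbA x (Ioo_subset_Icc_self hx)).2)⟩
  -- vanishing of the divergence integrals
  have hzero1 : ∫ q in s, p1 G2 q = 0 := by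
    refine int_p1_zero hR G2 hG2 fun z hz => ⟨?_, ?_⟩
    · simp [hG2def]
    · simp [hG2def, hb2 z hz]
  -- integrability of D2
  obtain ⟨M1, hM10, hM1⟩ := bound_linear (a := a) hR hΨ hax
  obtain ⟨M2, hM20, hM2⟩ := bound_linear (a := a) hR hΨ.smooth_p2 hax2
  obtain ⟨C, hC⟩ := (isCompact_Icc.prod isCompact_Icc :
      IsCompact (Icc (0:ℝ) R ×ˢ Icc (-a) a)).exists_bound_of_continuousOn
      hΨ.smooth_p2.smooth_p2.cont.continuousOn
  have hC0 : 0 ≤ C := (abs_nonneg _).trans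
    (hC (0, 0) ⟨⟨le_rfl, hR.le⟩, ⟨by norm_num; linarith, by norm_num; exact ha.le⟩⟩)
  have ia : IntegrableOn (fun q : ℝ × ℝ =>
      (0 * p1 Ψ q + q.1 * p2 (p1 Ψ) q) * p1 (p2 Ψ) q
        + q.1 * p1 Ψ q * p2 (p1 (p2 Ψ)) q) s :=
    integrableOn_strip_of_cont
      (((continuous_const.mul hΨ.smooth_p1.cont).add
          (continuous_fst.mul hΨ.smooth_p1.smooth_p2.cont)).mul hΨ.smooth_p2.smooth_p1.cont
        |>.add ((continuous_fst.mul hΨ.smooth_p1.cont).mul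
          hΨ.smooth_p2.smooth_p1.smooth_p2.cont))
  have ib : IntegrableOn (fun q : ℝ × ℝ =>
      (p2 Ψ q * p2 Ψ q + Ψ q * p2 (p2 Ψ) q) / q.1) s := by
    refine integrableOn_strip_of_bdd
      ((((hΨ.smooth_p2.cont.mul hΨ.smooth_p2.cont).add
        (hΨ.cont.mul hΨ.smooth_p2.smooth_p2.cont)).measurable.div
          measurable_fst).aestronglyMeasurable)
      (C := M2 ^ 2 * R + M1 * C) fun q hq => ?_
    have hr0 : (0:ℝ) < q.1 := hq.1.1
    have hqR : q.1 ≤ R := hq.1.2.le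
    have e1 := hM1 q hq
    have e2 := hM2 q hq
    have e3 : |p2 (p2 Ψ) q| ≤ C := hC q (strip_subset hq)
    rw [abs_div, abs_of_pos hr0, div_le_iff₀ hr0]
    calc |p2 Ψ q * p2 Ψ q + Ψ q * p2 (p2 Ψ) q|
        ≤ |p2 Ψ q| * |p2 Ψ q| + |Ψ q| * |p2 (p2 Ψ) q| := by
          refine (abs_add_le _ _).trans ?_
          rw [abs_mul, abs_mul]
      _ ≤ (M2 ^ 2 * R + M1 * C) * q.1 := by
          have b1 : |p2 Ψ q| * |p2 Ψ q| ≤ (M2 * q.1) * (M2 * q.1) :=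
            mul_le_mul e2 e2 (abs_nonneg _) (mul_nonneg hM20 hr0.le)
          have b2 : |Ψ q| * |p2 (p2 Ψ) q| ≤ (M1 * q.1) * C :=
            mul_le_mul e1 e3 (abs_nonneg _) (mul_nonneg hM10 hr0.le)
          nlinarith [mul_nonneg (mul_nonneg (mul_nonneg hM20 hM20) hr0.le)
            (sub_nonneg.2 hqR)]
  have iD2 : IntegrableOn D2 s := ia.add ib
  have hzero2 : ∫ q in s, D2 q = 0 := by
    refine int_p2_zero ha H2 D2 iD2 ?_ ?_ ?_
    · intro r _ z
      exact ((((hasDerivAt_const z r).mul (hΨ.smooth_p1.hd2 r z)).mul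
          (hΨ.smooth_p2.smooth_p1.hd2 r z)).add
        (((hΨ.hd2 r z).mul (hΨ.smooth_p2.hd2 r z)).div_const r))
    · intro r hr
      show Continuous fun z =>
        ((0 * p1 Ψ (r, z) + r * p2 (p1 Ψ) (r, z)) * p1 (p2 Ψ) (r, z)
          + r * p1 Ψ (r, z) * p2 (p1 (p2 Ψ)) (r, z))
        + (p2 Ψ (r, z) * p2 Ψ (r, z) + Ψ (r, z) * p2 (p2 Ψ) (r, z)) / r
      have hcm : Continuous fun z : ℝ => ((r, z) : ℝ × ℝ) :=
        continuous_const.prodMk continuous_id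
      exact ((((continuous_const.mul (hΨ.smooth_p1.cont.comp hcm)).add
          (continuous_const.mul ((hΨ.smooth_p1.smooth_p2.cont.comp hcm)))).mul
            (hΨ.smooth_p2.smooth_p1.cont.comp hcm)).add
          ((continuous_const.mul (hΨ.smooth_p1.cont.comp hcm)).mul
            (hΨ.smooth_p2.smooth_p1.smooth_p2.cont.comp hcm))).add
        ((((hΨ.smooth_p2.cont.comp hcm).mul (hΨ.smooth_p2.cont.comp hcm)).add
          ((hΨ.cont.comp hcm).mul (hΨ.smooth_p2.smooth_p2.cont.comp hcm))).div_const r)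
    · intro r hr
      have h1 := (hbA r (Ioo_subset_Icc_self hr)).1
      have h2 := (hbA r (Ioo_subset_Icc_self hr)).2
      simp [hH2def, h1, h2, (hp1a r hr).1, (hp1a r hr).2]
  -- pointwise derivative formula for p1 G2
  have hpG2 : ∀ q : ℝ × ℝ, p1 G2 q =
      -((1 * p1 Ψ q + q.1 * p1 (p1 Ψ) q) * p2 (p2 Ψ) q
        + q.1 * p1 Ψ q * p1 (p2 (p2 Ψ)) q) := by
    intro q
    have h := ((((hasDerivAt_id q.1).mul (hΨ.smooth_p1.hd1 q.1 q.2)).mul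
      (hΨ.smooth_p2.smooth_p2.hd1 q.1 q.2)).neg).deriv
    simpa [hG2def, p1, Pi.mul_def] using h
  -- the pointwise identity on the strip
  have key : ∀ q ∈ s,
      q.1 * ((p1 (p2 Ψ) q) ^ 2 + (p2 (p2 Ψ) q) ^ 2) + (p2 Ψ q) ^ 2 / q.1
        + q.1 * W q * p2 (p2 Ψ) q
      = p1 G2 q + D2 q := by
    intro q hq
    have hr0 : (0:ℝ) < q.1 := hq.1.1
    have hP := hPDE q hq
    have hP' : Ψ q = q.1 ^ 2 * W q + q.1 ^ 2 * p1 (p1 Ψ) q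
        + q.1 * p1 Ψ q + q.1 ^ 2 * p2 (p2 Ψ) q := by
      have h2 : q.1 ≠ 0 := hr0.ne'
      field_simp at hP
      apply mul_left_cancel₀ h2
      linear_combination q.1 * hP
    have hsw1 : p2 (p1 Ψ) q = p1 (p2 Ψ) q := (hΨ.swap q).symm
    have hsw2 : p2 (p1 (p2 Ψ)) q = p1 (p2 (p2 Ψ)) q := (hΨ.smooth_p2.swap q).symm
    rw [hpG2 q, hD2def]
    simp only [hsw1, hsw2]
    field_simp
    linear_combination (-(p2 (p2 Ψ) q)) * hP'
  -- integrability of the identity pieces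
  have k1 : IntegrableOn (fun q : ℝ × ℝ =>
      q.1 * ((p1 (p2 Ψ) q) ^ 2 + (p2 (p2 Ψ) q) ^ 2)) s :=
    integrableOn_strip_of_cont (continuous_fst.mul
      ((hΨ.smooth_p2.smooth_p1.cont.pow 2).add (hΨ.smooth_p2.smooth_p2.cont.pow 2)))
  have k2 : IntegrableOn (fun q : ℝ × ℝ => (p2 Ψ q) ^ 2 / q.1) s :=
    integrableOn_sq_div hR hΨ.smooth_p2 hax2
  have k3 : IntegrableOn (fun q : ℝ × ℝ => q.1 * W q * p2 (p2 Ψ) q) s :=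
    integrableOn_strip_of_cont ((continuous_fst.mul hW.cont).mul hΨ.smooth_p2.smooth_p2.cont)
  have iG2 : IntegrableOn (p1 G2) s := integrableOn_strip_of_cont hG2.smooth_p1.cont
  -- integral identity
  have hident : (∫ q in s, q.1 * ((p1 (p2 Ψ) q) ^ 2 + (p2 (p2 Ψ) q) ^ 2))
      + (∫ q in s, (p2 Ψ q) ^ 2 / q.1)
      + (∫ q in s, q.1 * W q * p2 (p2 Ψ) q) = 0 := by
    have e1 : ∫ q in s, (q.1 * ((p1 (p2 Ψ) q) ^ 2 + (p2 (p2 Ψ) q) ^ 2)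
        + (p2 Ψ q) ^ 2 / q.1 + q.1 * W q * p2 (p2 Ψ) q)
        = ∫ q in s, (p1 G2 q + D2 q) :=
      setIntegral_congr_fun strip_measurable fun q hq => key q hq
    have k12 : IntegrableOn (fun q : ℝ × ℝ =>
        q.1 * ((p1 (p2 Ψ) q) ^ 2 + (p2 (p2 Ψ) q) ^ 2) + (p2 Ψ q) ^ 2 / q.1) s := k1.add k2
    rw [integral_add k12 k3, integral_add k1 k2, integral_add iG2 iD2,
      hzero1, hzero2] at e1
    linarith
  -- Cauchy-Schwarz bound for the coupling term
  have intW : IntegrableOn (fun q : ℝ × ℝ => q.1 * (W q) ^ 2) s :=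
    integrableOn_strip_of_cont (continuous_fst.mul (hW.cont.pow 2))
  have hmono : (∫ q in s, -(q.1 * W q * p2 (p2 Ψ) q))
      ≤ ∫ q in s, (q.1 * (W q) ^ 2) / 2
          + (q.1 * ((p1 (p2 Ψ) q) ^ 2 + (p2 (p2 Ψ) q) ^ 2)) / 2 := by
    refine setIntegral_mono_on k3.neg ((intW.div_const 2).add (k1.div_const 2))
      strip_measurable fun q hq => ?_
    have hr0 : (0:ℝ) < q.1 := hq.1.1
    nlinarith [mul_nonneg hr0.le (sq_nonneg (W q + p2 (p2 Ψ) q)),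
      mul_nonneg hr0.le (sq_nonneg (p1 (p2 Ψ) q))]
  have e2 : (∫ q in s, (q.1 * (W q) ^ 2) / 2
        + (q.1 * ((p1 (p2 Ψ) q) ^ 2 + (p2 (p2 Ψ) q) ^ 2)) / 2)
      = (∫ q in s, q.1 * (W q) ^ 2) / 2
        + (∫ q in s, q.1 * ((p1 (p2 Ψ) q) ^ 2 + (p2 (p2 Ψ) q) ^ 2)) / 2 := by
    have j1 : IntegrableOn (fun q : ℝ × ℝ => (q.1 * (W q) ^ 2) / 2) s := intW.div_const 2
    have j2 : IntegrableOn (fun q : ℝ × ℝ =>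
        (q.1 * ((p1 (p2 Ψ) q) ^ 2 + (p2 (p2 Ψ) q) ^ 2)) / 2) s := k1.div_const 2
    rw [integral_add j1 j2, integral_div, integral_div]
  have eneg : (∫ q in s, -(q.1 * W q * p2 (p2 Ψ) q))
      = -∫ q in s, q.1 * W q * p2 (p2 Ψ) q := by
    rw [integral_neg]
  -- the Poincaré-type bound in r
  have e5 : (∫ q in s, q.1 * (p2 Ψ q) ^ 2) ≤ R ^ 2 * ∫ q in s, (p2 Ψ q) ^ 2 / q.1 := by
    rw [← integral_const_mul]
    refine setIntegral_mono_on
      (integrableOn_strip_of_cont (continuous_fst.mul (hΨ.smooth_p2.cont.pow 2)))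
      (k2.const_mul (R ^ 2)) strip_measurable fun q hq => ?_
    have hr0 : (0:ℝ) < q.1 := hq.1.1
    have hqR : q.1 ≤ R := hq.1.2.le
    rw [show R ^ 2 * ((p2 Ψ q) ^ 2 / q.1) = R ^ 2 * (p2 Ψ q) ^ 2 / q.1 from
      (mul_div_assoc _ _ _).symm, le_div_iff₀ hr0]
    nlinarith [mul_nonneg (mul_nonneg (sub_nonneg.2 hqR)
      (by linarith : (0:ℝ) ≤ R + q.1)) (sq_nonneg (p2 Ψ q))]
  -- conversions and conclusion
  have e4 : (∫ q in s, q.1 * (p2 Ψ q / q.1) ^ 2) = ∫ q in s, (p2 Ψ q) ^ 2 / q.1 := by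
    refine setIntegral_congr_fun strip_measurable fun q hq => ?_
    have hr0 : (0:ℝ) < q.1 := hq.1.1
    field_simp
  have hk1nn : (0:ℝ) ≤ ∫ q in s, q.1 * ((p1 (p2 Ψ) q) ^ 2 + (p2 (p2 Ψ) q) ^ 2) :=
    setIntegral_nonneg strip_measurable fun q hq =>
      mul_nonneg hq.1.1.le (by positivity)
  have hk2nn : (0:ℝ) ≤ ∫ q in s, (p2 Ψ q) ^ 2 / q.1 :=
    setIntegral_nonneg strip_measurable fun q hq =>
      div_nonneg (sq_nonneg _) hq.1.1.le
  have hWnn : (0:ℝ) ≤ ∫ q in s, q.1 * (W q) ^ 2 :=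
    setIntegral_nonneg strip_measurable fun q hq => mul_nonneg hq.1.1.le (sq_nonneg _)
  have hK12 : (∫ q in s, q.1 * ((p1 (p2 Ψ) q) ^ 2 + (p2 (p2 Ψ) q) ^ 2))
      + 2 * (∫ q in s, (p2 Ψ q) ^ 2 / q.1) ≤ ∫ q in s, q.1 * (W q) ^ 2 := by
    linarith [hident, hmono, e2, eneg]
  have hK2W : (∫ q in s, (p2 Ψ q) ^ 2 / q.1) ≤ ∫ q in s, q.1 * (W q) ^ 2 := by
    linarith [hk1nn, hk2nn]
  have h6 : R ^ 2 * (∫ q in s, (p2 Ψ q) ^ 2 / q.1)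
      ≤ R ^ 2 * ∫ q in s, q.1 * (W q) ^ 2 :=
    mul_le_mul_of_nonneg_left hK2W (sq_nonneg R)
  rw [e4]
  linarith [e5, hK12, hk2nn, h6]

/-- Lemma 2.6, energy estimates for the stream function: for an axially
symmetric smooth divergence-free field `v` with `v_r = 0` on `S₁`, `v_z = 0` on `S₂`, and the
stream function `ψ` solving `−Δψ + ψ/r² = ω_φ` with `ψ = 0` on `S`, there is a constant
`c > 0` depending only on `Ω` such that
(i)  `|∇ψ|²_{2,Ω} + |ψ/r|²_{2,Ω} ≤ c (|v_r|²_{2,Ω} + |v_z|²_{2,Ω})`, and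
(ii) if moreover `ω_φ = 0` on `S`, then for every `t`,
`∫₀^t (|∇ψ,z|² + |(ψ/r),z|² + |ψ,z|²)_{2,Ω} dt' ≤ c ∫₀^t |ω_φ|²_{2,Ω} dt'`. -/
theorem stmt_5 (R a : ℝ) (hR : 0 < R) (ha : 0 < a) :
    ∃ c > 0, ∀ vr vφ vz ψ : ℝ → ℝ → ℝ → ℝ,
      (∀ n : ℕ, ContDiff ℝ n (fun q : ℝ × ℝ × ℝ => vr q.1 q.2.1 q.2.2)) →
      (∀ n : ℕ, ContDiff ℝ n (fun q : ℝ × ℝ × ℝ => vφ q.1 q.2.1 q.2.2)) →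
      (∀ n : ℕ, ContDiff ℝ n (fun q : ℝ × ℝ × ℝ => vz q.1 q.2.1 q.2.2)) →
      (∀ n : ℕ, ContDiff ℝ n (fun q : ℝ × ℝ × ℝ => ψ q.1 q.2.1 q.2.2)) →
      -- divergence-free, in cylindrical coordinates:
      (∀ r z t, (r, z) ∈ cylStrip R a → pdr vr r z t + vr r z t / r + pdz vz r z t = 0) →
      -- axial regularity of the axially symmetric fields:
      (∀ z t, vr 0 z t = 0 ∧ vφ 0 z t = 0 ∧ ψ 0 z t = 0) →
      -- `v_r = 0` on `S₁` and `v_z = 0` on `S₂`: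
      (∀ z ∈ Icc (-a) a, ∀ t, vr R z t = 0) →
      (∀ r ∈ Icc (0:ℝ) R, ∀ t, vz r a t = 0 ∧ vz r (-a) t = 0) →
      -- `−Δψ + ψ/r² = ω_φ` in `Ω`:
      (∀ r z t, (r, z) ∈ cylStrip R a →
        - (pdr (pdr ψ) r z t + pdr ψ r z t / r + pdz (pdz ψ) r z t) + ψ r z t / r ^ 2
          = pdz vr r z t - pdr vz r z t) →
      -- `ψ = 0` on `S`:
      (∀ z ∈ Icc (-a) a, ∀ t, ψ R z t = 0) →
      (∀ r ∈ Icc (0:ℝ) R, ∀ t, ψ r a t = 0 ∧ ψ r (-a) t = 0) →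
      -- (i):
      ((∀ t : ℝ,
        (∫ q, ((pdr ψ q.1 q.2 t) ^ 2 + (pdz ψ q.1 q.2 t) ^ 2) ∂(cylMeas R a))
          + (∫ q, (ψ q.1 q.2 t / q.1) ^ 2 ∂(cylMeas R a))
        ≤ c * ((∫ q, (vr q.1 q.2 t) ^ 2 ∂(cylMeas R a))
              + (∫ q, (vz q.1 q.2 t) ^ 2 ∂(cylMeas R a)))) ∧
      -- (ii):
      (((∀ z ∈ Icc (-a) a, ∀ t, pdz vr R z t - pdr vz R z t = 0) ∧
        (∀ r ∈ Icc (0:ℝ) R, ∀ t,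
          (pdz vr r a t - pdr vz r a t = 0) ∧ (pdz vr r (-a) t - pdr vz r (-a) t = 0))) →
        ∀ t : ℝ,
          (∫ t' in Ioo 0 t,
            ((∫ q, ((pdr (pdz ψ) q.1 q.2 t') ^ 2 + (pdz (pdz ψ) q.1 q.2 t') ^ 2) ∂(cylMeas R a))
              + (∫ q, (pdz ψ q.1 q.2 t' / q.1) ^ 2 ∂(cylMeas R a))
              + (∫ q, (pdz ψ q.1 q.2 t') ^ 2 ∂(cylMeas R a))))
          ≤ c * ∫ t' in Ioo 0 t,
              ∫ q, (pdz vr q.1 q.2 t' - pdr vz q.1 q.2 t') ^ 2 ∂(cylMeas R a))) := by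
  
  refine ⟨2 + R ^ 2, by positivity, ?_⟩
  intro vr vφ vz ψ hvr hvφ hvz hψ hdiv hax hS1 hS2 hPDE hψR hψA
  have hψ' : Sm ψ := hψ
  have hvr' : Sm vr := hvr
  have hvz' : Sm vz := hvz
  constructor
  · -- part (i)
    intro t
    have main := aux_key hR ha (sp ψ t) (sp vr t) (sp vz t)
      (hψ'.slice t) (hvr'.slice t) (hvz'.slice t)
      (fun z => (hax z t).2.2)
      (fun q hq => hPDE q.1 q.2 t hq)
      (fun z hz => hψR z hz t)
      (fun r hr => hψA r hr t)
    have main' : (∫ q in cylStrip R a,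
          q.1 * ((pdr ψ q.1 q.2 t) ^ 2 + (pdz ψ q.1 q.2 t) ^ 2))
        + (∫ q in cylStrip R a, q.1 * (ψ q.1 q.2 t / q.1) ^ 2)
        ≤ 2 * ((∫ q in cylStrip R a, q.1 * (vr q.1 q.2 t) ^ 2)
            + (∫ q in cylStrip R a, q.1 * (vz q.1 q.2 t) ^ 2)) := main
    rw [integral_cylMeas' (fun q => (pdr ψ q.1 q.2 t) ^ 2 + (pdz ψ q.1 q.2 t) ^ 2),
      integral_cylMeas' (fun q => (ψ q.1 q.2 t / q.1) ^ 2),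
      integral_cylMeas' (fun q => (vr q.1 q.2 t) ^ 2),
      integral_cylMeas' (fun q => (vz q.1 q.2 t) ^ 2)]
    have hCnn : (0:ℝ) ≤ ∫ q in cylStrip R a, q.1 * (vr q.1 q.2 t) ^ 2 :=
      setIntegral_nonneg strip_measurable fun q hq => mul_nonneg hq.1.1.le (sq_nonneg _)
    have hDnn : (0:ℝ) ≤ ∫ q in cylStrip R a, q.1 * (vz q.1 q.2 t) ^ 2 :=
      setIntegral_nonneg strip_measurable fun q hq => mul_nonneg hq.1.1.le (sq_nonneg _)
    have h1 := mul_le_mul_of_nonneg_left main' (by positivity : (0:ℝ) ≤ 2 * π)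
    nlinarith [h1, pi_pos, mul_nonneg (sq_nonneg R)
      (mul_nonneg (by positivity : (0:ℝ) ≤ 2 * π) (add_nonneg hCnn hDnn))]
  · -- part (ii)
    intro _ t
    have hFg : ∀ t' : ℝ,
        (∫ q, ((pdr (pdz ψ) q.1 q.2 t') ^ 2 + (pdz (pdz ψ) q.1 q.2 t') ^ 2) ∂(cylMeas R a))
          + (∫ q, (pdz ψ q.1 q.2 t' / q.1) ^ 2 ∂(cylMeas R a))
          + (∫ q, (pdz ψ q.1 q.2 t') ^ 2 ∂(cylMeas R a))
        ≤ (2 + R ^ 2) * ∫ q in cylStrip R a,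
            (2 * π * q.1) * (pdz vr q.1 q.2 t' - pdr vz q.1 q.2 t') ^ 2 := by
      intro t'
      have hW : Sm2 (fun q : ℝ × ℝ => pdz vr q.1 q.2 t' - pdr vz q.1 q.2 t') :=
        fun n => ((hvr'.pdz.slice t') n).sub ((hvz'.pdr.slice t') n)
      have main := aux_key2 hR ha (sp ψ t')
        (fun q : ℝ × ℝ => pdz vr q.1 q.2 t' - pdr vz q.1 q.2 t')
        (hψ'.slice t') hW
        (fun z => (hax z t').2.2)
        (fun q hq => hPDE q.1 q.2 t' hq)
        (fun z hz => hψR z hz t')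
        (fun r hr => hψA r hr t')
      have main' : (∫ q in cylStrip R a,
            q.1 * ((pdr (pdz ψ) q.1 q.2 t') ^ 2 + (pdz (pdz ψ) q.1 q.2 t') ^ 2))
          + (∫ q in cylStrip R a, q.1 * (pdz ψ q.1 q.2 t' / q.1) ^ 2)
          + (∫ q in cylStrip R a, q.1 * (pdz ψ q.1 q.2 t') ^ 2)
          ≤ (1 + R ^ 2) * ∫ q in cylStrip R a,
              q.1 * (pdz vr q.1 q.2 t' - pdr vz q.1 q.2 t') ^ 2 := main
      rw [integral_cylMeas'
          (fun q => (pdr (pdz ψ) q.1 q.2 t') ^ 2 + (pdz (pdz ψ) q.1 q.2 t') ^ 2),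
        integral_cylMeas' (fun q => (pdz ψ q.1 q.2 t' / q.1) ^ 2),
        integral_cylMeas' (fun q => (pdz ψ q.1 q.2 t') ^ 2)]
      have hWrw : ∫ q in cylStrip R a,
          (2 * π * q.1) * (pdz vr q.1 q.2 t' - pdr vz q.1 q.2 t') ^ 2
          = (2 * π) * ∫ q in cylStrip R a,
              q.1 * (pdz vr q.1 q.2 t' - pdr vz q.1 q.2 t') ^ 2 := by
        simp_rw [mul_assoc]
        rw [integral_const_mul, integral_const_mul]
      rw [hWrw]
      have hWnn : (0:ℝ) ≤ ∫ q in cylStrip R a,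
          q.1 * (pdz vr q.1 q.2 t' - pdr vz q.1 q.2 t') ^ 2 :=
        setIntegral_nonneg strip_measurable fun q hq => mul_nonneg hq.1.1.le (sq_nonneg _)
      have h1 := mul_le_mul_of_nonneg_left main' (by positivity : (0:ℝ) ≤ 2 * π)
      nlinarith [h1, pi_pos, mul_nonneg (by positivity : (0:ℝ) ≤ 2 * π) hWnn]
    have hF0 : ∀ t' : ℝ, (0:ℝ) ≤
        (∫ q, ((pdr (pdz ψ) q.1 q.2 t') ^ 2 + (pdz (pdz ψ) q.1 q.2 t') ^ 2) ∂(cylMeas R a))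
          + (∫ q, (pdz ψ q.1 q.2 t' / q.1) ^ 2 ∂(cylMeas R a))
          + (∫ q, (pdz ψ q.1 q.2 t') ^ 2 ∂(cylMeas R a)) := by
      intro t'
      have n1 : (0:ℝ) ≤ ∫ q, ((pdr (pdz ψ) q.1 q.2 t') ^ 2
          + (pdz (pdz ψ) q.1 q.2 t') ^ 2) ∂(cylMeas R a) :=
        integral_nonneg fun q => by positivity
      have n2 : (0:ℝ) ≤ ∫ q, (pdz ψ q.1 q.2 t' / q.1) ^ 2 ∂(cylMeas R a) :=
        integral_nonneg fun q => sq_nonneg _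
      have n3 : (0:ℝ) ≤ ∫ q, (pdz ψ q.1 q.2 t') ^ 2 ∂(cylMeas R a) :=
        integral_nonneg fun q => sq_nonneg _
      linarith
    -- integrability of the (continuous) majorant
    have hGc : Continuous fun p : (ℝ × ℝ) × ℝ =>
        (2 * π * p.1.1) * (pdz vr p.1.1 p.1.2 p.2 - pdr vz p.1.1 p.1.2 p.2) ^ 2 := by
      have hre : Continuous fun p : (ℝ × ℝ) × ℝ => ((p.1.1, p.1.2, p.2) : ℝ × ℝ × ℝ) :=
        (continuous_fst.fst).prodMk ((continuous_fst.snd).prodMk continuous_snd)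
      have c1 : Continuous (unc3 (pdz vr)) := (hvr'.pdz).cont
      have c2 : Continuous (unc3 (pdr vz)) := (hvz'.pdr).cont
      exact (continuous_const.mul continuous_fst.fst).mul
        (((c1.comp hre).sub (c2.comp hre)).pow 2)
    have hcont : Continuous fun t' : ℝ => ∫ q in cylStrip R a,
        (2 * π * q.1) * (pdz vr q.1 q.2 t' - pdr vz q.1 q.2 t') ^ 2 :=
      cont_param (G := fun q t' => (2 * π * q.1) * (pdz vr q.1 q.2 t' - pdr vz q.1 q.2 t') ^ 2)
        hGc
    have hgInt : IntegrableOn (fun t' : ℝ => (2 + R ^ 2) * ∫ q in cylStrip R a,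
        (2 * π * q.1) * (pdz vr q.1 q.2 t' - pdr vz q.1 q.2 t') ^ 2) (Ioo 0 t) :=
      (((continuous_const.mul hcont).continuousOn.integrableOn_compact
        isCompact_Icc).mono_set Ioo_subset_Icc_self)
    have step := integral_mono_of_nonneg (μ := volume.restrict (Ioo 0 t))
      (Filter.Eventually.of_forall hF0) hgInt (Filter.Eventually.of_forall hFg)
    have h2 : (∫ t' in Ioo 0 t, (2 + R ^ 2) * ∫ q in cylStrip R a,
          (2 * π * q.1) * (pdz vr q.1 q.2 t' - pdr vz q.1 q.2 t') ^ 2)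
        = (2 + R ^ 2) * ∫ t' in Ioo 0 t, ∫ q in cylStrip R a,
            (2 * π * q.1) * (pdz vr q.1 q.2 t' - pdr vz q.1 q.2 t') ^ 2 :=
      integral_const_mul _ _
    have h3 : (∫ t' in Ioo 0 t,
          ∫ q, (pdz vr q.1 q.2 t' - pdr vz q.1 q.2 t') ^ 2 ∂(cylMeas R a))
        = ∫ t' in Ioo 0 t, ∫ q in cylStrip R a,
            (2 * π * q.1) * (pdz vr q.1 q.2 t' - pdr vz q.1 q.2 t') ^ 2 := by
      refine setIntegral_congr_fun measurableSet_Ioo fun t' _ => ?_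
      exact integral_cylMeas (fun q => (pdz vr q.1 q.2 t' - pdr vz q.1 q.2 t') ^ 2)
    rw [h3]
    exact step.trans (le_of_eq h2)
end
end
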